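/- arXiv:1411.6606 — 6 statements merged into one kernel-verified Lean document; each statement's English description precedes it below -/
import Mathlib

section
/- Each summand in the definition of the Baxter numbers is a natural number: for all n ≥ 1 and 1 ≤ k ≤ n, the product \binom{n+1}{1}\binom{n+1}{2} divides \binom{n+1}{k-1}\binom{n+1}{k}\binom{n+1}{k+1}. -/
-- first order identities
lemma LA (m j : ℕ) : (m+1).choose (j+1) * (j+1) = (m+1) * (m.choose j) :=
  (Nat.add_one_mul_choose_eq m j).symm

lemma LB (m j : ℕ) : (m+1).choose j * (m+1-j) = (m+1) * (m.choose j) := by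
  rw [← Nat.choose_mul_succ_eq, mul_comm]

-- second order, RHS shaped as n * _
lemma LA2 (n j : ℕ) (hn : 1 ≤ n) :
    (n+1).choose (j+2) * ((j+2)*(j+1)) = n * ((n+1) * ((n-1).choose j)) := by
  have h1 := LA n (j+1)
  have h2 := LA (n-1) j
  rw [Nat.sub_add_cancel hn] at h2
  calc (n+1).choose (j+2) * ((j+2)*(j+1)) = ((n+1).choose (j+2) * (j+2)) * (j+1) := by ring
    _ = (n+1) * (n.choose (j+1) * (j+1)) := by rw [h1]; ring
    _ = n * ((n+1) * ((n-1).choose j)) := by rw [h2]; ring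

lemma LB2 (n j : ℕ) (hn : 1 ≤ n) :
    (n+1).choose j * ((n+1-j)*(n-j)) = n * ((n+1) * ((n-1).choose j)) := by
  have h1 := LB n j
  have h2 := LB (n-1) j
  rw [Nat.sub_add_cancel hn] at h2
  calc (n+1).choose j * ((n+1-j)*(n-j)) = ((n+1).choose j * (n+1-j)) * (n-j) := by ring
    _ = (n+1) * (n.choose j * (n-j)) := by rw [h1]; ring
    _ = n * ((n+1) * ((n-1).choose j)) := by rw [h2]; ring

lemma extract {p t M X c Y : ℕ} (hp : p.Prime) (hM : p^t ∣ M)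
    (hid : X * c = M * Y) (hc : ¬ p ∣ c) : p^t ∣ X := by
  have h1 : p^t ∣ X * c := hid ▸ hM.mul_right Y
  exact ((Nat.Prime.coprime_iff_not_dvd hp).mpr hc).pow_left t |>.dvd_of_dvd_mul_right h1

lemma extract2 {t M X v w Y : ℕ} (ht : 1 ≤ t) (hM : 2^t ∣ M)
    (hid : X * (v*w) = M * Y) (hv2 : 2 ∣ v) (hv4 : ¬ (4:ℕ) ∣ v) (hw : ¬ 2 ∣ w) :
    2^(t-1) ∣ X := by
  obtain ⟨u, rfl⟩ := hv2
  have hu : ¬ 2 ∣ u := by rintro ⟨s, rfl⟩; exact hv4 ⟨s, by ring⟩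
  have h1 : 2^t ∣ 2 * (X * (u*w)) := by
    have : X * (2*u*w) = M * Y := hid
    calc 2^t ∣ M * Y := hM.mul_right Y
      _ = 2 * (X * (u*w)) := by rw [← this]; ring
  have h2 : (2:ℕ)^t = 2 * 2^(t-1) := by
    have : t = 1 + (t-1) := by omega
    rw [this, pow_add, pow_one]; simp
  rw [h2] at h1
  have h3 : 2^(t-1) ∣ X * (u*w) := (Nat.mul_dvd_mul_iff_left (by norm_num : 0 < 2)).mp h1
  have huw : ¬ 2 ∣ u * w := by
    intro h
    rcases (Nat.Prime.dvd_mul Nat.prime_two).mp h with h' | h' <;> [exact hu h'; exact hw h']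
  exact ((Nat.Prime.coprime_iff_not_dvd Nat.prime_two).mpr huw).pow_left (t-1)
    |>.dvd_of_dvd_mul_right h3

/-- Each summand in the definition of the Baxter numbers is a natural number:
for `1 ≤ k ≤ n`, the product `C(n+1,1)·C(n+1,2)` divides
`C(n+1,k-1)·C(n+1,k)·C(n+1,k+1)`. -/
theorem baxter_summand_integral (n k : ℕ) (hn : 1 ≤ n) (hk1 : 1 ≤ k) (hkn : k ≤ n) :
    ((n+1).choose 1 * (n+1).choose 2) ∣
      ((n+1).choose (k-1) * (n+1).choose k * (n+1).choose (k+1)) := by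
  obtain ⟨j, rfl⟩ : ∃ j, k = j + 1 := ⟨k-1, by omega⟩
  have hjn : j + 1 ≤ n := hkn
  show ((n+1).choose 1 * (n+1).choose 2) ∣
      ((n+1).choose j * (n+1).choose (j+1) * (n+1).choose (j+2))
  set a := (n+1).choose j with ha_def
  set b := (n+1).choose (j+1) with hb_def
  set c := (n+1).choose (j+2) with hc_def
  have ha0 : 0 < a := Nat.choose_pos (by omega)
  have hb0 : 0 < b := Nat.choose_pos (by omega)
  have hc0 : 0 < c := Nat.choose_pos (by omega)
  have hD2 : 2 * ((n+1).choose 1 * (n+1).choose 2) = n * (n+1)^2 := by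
    have h2 := LA n 1
    rw [Nat.choose_one_right] at h2
    rw [Nat.choose_one_right]
    calc 2 * ((n+1) * (n+1).choose 2) = (n+1) * ((n+1).choose 2 * 2) := by ring
      _ = (n+1) * ((n+1) * n) := by rw [h2]
      _ = n * (n+1)^2 := by ring
  suffices h : n * (n+1)^2 ∣ 2 * (a * b * c) by
    rw [← hD2] at h
    exact (Nat.mul_dvd_mul_iff_left (show 0 < 2 by norm_num)).mp h
  have hN0 : 2 * (a * b * c) ≠ 0 := by positivity
  have hD0 : n * (n+1)^2 ≠ 0 := by
    have : n ≠ 0 := by omega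
    positivity
  have key : ∀ p : ℕ, p.Prime →
      p ^ (n.factorization p + 2 * (n+1).factorization p) ∣ 2 * (a * b * c) := by
    intro p hp
    set m := n.factorization p with hm_def
    set e := (n+1).factorization p with he_def
    have hpm : p ^ m ∣ n := Nat.ordProj_dvd n p
    have hpe : p ^ e ∣ (n+1) := Nat.ordProj_dvd (n+1) p
    have hp1 : 1 < p := hp.one_lt
    by_cases hdvd1 : p ∣ (n+1)
    · -- the (n+1)-part: need p^(2e)
      have hm0 : m = 0 := by
        rw [hm_def]
        apply Nat.factorization_eq_zero_of_not_dvd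
        intro h
        have h1 : p ∣ (n+1) - n := Nat.dvd_sub hdvd1 h
        rw [show n+1-n = 1 by omega] at h1
        exact absurd (Nat.le_of_dvd one_pos h1) (by omega)
      rw [hm0, zero_add]
      by_cases hp2 : p = 2
      · subst hp2
        have hn1even : 2 ∣ n + 1 := hdvd1
        have he1 : 1 ≤ e := by
          rw [he_def]
          exact Nat.Prime.factorization_pos_of_dvd Nat.prime_two (by omega) hdvd1
        by_cases hj : 2 ∣ j
        · -- j even : b gets 2^e, a or c gets 2^(e-1)
          have hb : 2^e ∣ b := extract Nat.prime_two hpe (LA n j) (by omega)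
          by_cases h4 : (4:ℕ) ∣ j + 2
          · -- then j ≡ 2 mod 4, j ≥ 2 : use a
            have haid : a * (j * 1) = (n+1) * (n.choose (j-1)) := by
              have h5 := LA n (j-1)
              rw [show j-1+1 = j by omega] at h5
              rw [mul_one]; exact h5
            have ha' : 2^(e-1) ∣ a :=
              extract2 he1 hpe haid (by omega) (by omega) (by norm_num)
            have hmul : 2^e * 2^(e-1) ∣ b * a := mul_dvd_mul hb ha'
            calc 2^(2*e) = 2 * (2^e * 2^(e-1)) := by
                  rw [show 2*e = 1 + (e + (e-1)) by omega, pow_add, pow_add, pow_one]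
              _ ∣ 2 * (b * a) := mul_dvd_mul_left 2 hmul
              _ ∣ 2 * (a * b * c) := ⟨c, by ring⟩
          · -- 2 ∥ j+2 : use c
            have hcid : c * ((j+2) * 1) = (n+1) * (n.choose (j+1)) := by
              rw [mul_one]; exact LA n (j+1)
            have hc' : 2^(e-1) ∣ c :=
              extract2 he1 hpe hcid (by omega) h4 (by norm_num)
            have hmul : 2^e * 2^(e-1) ∣ b * c := mul_dvd_mul hb hc'
            calc 2^(2*e) = 2 * (2^e * 2^(e-1)) := by
                  rw [show 2*e = 1 + (e + (e-1)) by omega, pow_add, pow_add, pow_one]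
              _ ∣ 2 * (b * c) := mul_dvd_mul_left 2 hmul
              _ ∣ 2 * (a * b * c) := ⟨a, by ring⟩
        · -- j odd : a and c each get 2^e
          have hc : 2^e ∣ c := extract Nat.prime_two hpe (LA n (j+1)) (by omega)
          have ha : 2^e ∣ a := extract Nat.prime_two hpe (LB n j) (by omega)
          calc 2^(2*e) = 2^e * 2^e := by rw [two_mul, pow_add]
            _ ∣ a * c := mul_dvd_mul ha hc
            _ ∣ 2 * (a * b * c) := ⟨2*b, by ring⟩
      · -- p odd dividing n+1
        by_cases hjk : p ∣ j + 1
        · -- p ∣ k : use a and c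
          have hnotc : ¬ p ∣ j + 2 := by
            intro h
            have h1 : p ∣ (j+2) - (j+1) := Nat.dvd_sub h hjk
            rw [show j+2-(j+1) = 1 by omega] at h1
            exact absurd (Nat.le_of_dvd one_pos h1) (by omega)
          have hc : p^e ∣ c := extract hp hpe (LA n (j+1)) hnotc
          have hnota : ¬ p ∣ (n+1-j) := by
            intro h
            have h1 : p ∣ (n+1) - (n+1-j) := Nat.dvd_sub hdvd1 h
            rw [show (n+1)-(n+1-j) = j by omega] at h1
            have h2 : p ∣ (j+1) - j := Nat.dvd_sub hjk h1
            rw [show j+1-j = 1 by omega] at h2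
            exact absurd (Nat.le_of_dvd one_pos h2) (by omega)
          have ha : p^e ∣ a := extract hp hpe (LB n j) hnota
          calc p^(2*e) = p^e * p^e := by rw [two_mul, pow_add]
            _ ∣ a * c := mul_dvd_mul ha hc
            _ ∣ 2 * (a * b * c) := ⟨2*b, by ring⟩
        · by_cases hjk2 : p ∣ j + 2
          · -- p ∣ k+1 : use a and b
            have hb : p^e ∣ b := extract hp hpe (LA n j) hjk
            have hnota : ¬ p ∣ (n+1-j) := by
              intro h
              have h1 : p ∣ (n+1) - (n+1-j) := Nat.dvd_sub hdvd1 h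
              rw [show (n+1)-(n+1-j) = j by omega] at h1
              have h2 : p ∣ (j+2) - j := Nat.dvd_sub hjk2 h1
              rw [show j+2-j = 2 by omega] at h2
              have := Nat.le_of_dvd (by norm_num) h2
              interval_cases p
              · exact absurd rfl hp2
            have ha : p^e ∣ a := extract hp hpe (LB n j) hnota
            calc p^(2*e) = p^e * p^e := by rw [two_mul, pow_add]
              _ ∣ a * b := mul_dvd_mul ha hb
              _ ∣ 2 * (a * b * c) := ⟨2*c, by ring⟩
          · -- p coprime to k(k+1) : use b and c
            have hb : p^e ∣ b := extract hp hpe (LA n j) hjk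
            have hc : p^e ∣ c := extract hp hpe (LA n (j+1)) hjk2
            calc p^(2*e) = p^e * p^e := by rw [two_mul, pow_add]
              _ ∣ b * c := mul_dvd_mul hb hc
              _ ∣ 2 * (a * b * c) := ⟨2*a, by ring⟩
    · -- p does not divide n+1
      have he0 : e = 0 := by
        rw [he_def]; exact Nat.factorization_eq_zero_of_not_dvd hdvd1
      rw [he0, Nat.mul_zero, Nat.add_zero]
      by_cases hdvd2 : p ∣ n
      · by_cases hp2 : p = 2
        · subst hp2
          have hm1 : 1 ≤ m := by
            rw [hm_def]
            exact Nat.Prime.factorization_pos_of_dvd Nat.prime_two (by omega) hdvd2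
          have hneven : 2 ∣ n := hdvd2
          suffices hs : 2^(m-1) ∣ a * b * c by
            calc 2^m = 2 * 2^(m-1) := by
                  conv_lhs => rw [show m = 1 + (m-1) by omega]
                  rw [pow_add, pow_one]
              _ ∣ 2 * (a * b * c) := mul_dvd_mul_left 2 hs
          by_cases hj : 2 ∣ j
          · by_cases h4 : (4:ℕ) ∣ j + 2
            · -- j ≡ 2 mod 4, j ≥ 2 : use b
              have hbid : b * (j * (j+1)) = n * ((n+1) * ((n-1).choose (j-1))) := by
                have h5 := LA2 n (j-1) hn
                rw [show j-1+2 = j+1 by omega, show j-1+1 = j by omega,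
                  mul_comm (j+1) j] at h5
                exact h5
              have hb' : 2^(m-1) ∣ b :=
                extract2 hm1 hpm hbid hj (by omega) (by omega)
              exact hb'.trans ⟨a*c, by ring⟩
            · -- use c
              have hc' : 2^(m-1) ∣ c :=
                extract2 hm1 hpm (LA2 n j hn) (by omega) h4 (by omega)
              exact hc'.trans ⟨a*b, by ring⟩
          · by_cases h4 : (4:ℕ) ∣ j + 1
            · -- j ≡ 3 mod 4, j ≥ 3 : use a
              have haid : a * ((j-1) * j) = n * ((n+1) * ((n-1).choose (j-2))) := by
                have h5 := LA2 n (j-2) hn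
                rw [show j-2+2 = j by omega, show j-2+1 = j-1 by omega,
                  mul_comm j (j-1)] at h5
                exact h5
              have ha' : 2^(m-1) ∣ a :=
                extract2 hm1 hpm haid (by omega) (by omega) hj
              exact ha'.trans ⟨b*c, by ring⟩
            · -- use c
              have hcid : c * ((j+1) * (j+2)) = n * ((n+1) * ((n-1).choose j)) := by
                have h5 := LA2 n j hn
                rw [mul_comm (j+2) (j+1)] at h5
                exact h5
              have hc' : 2^(m-1) ∣ c :=
                extract2 hm1 hpm hcid (by omega) h4 (by omega)
              exact hc'.trans ⟨a*b, by ring⟩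
        · -- p odd dividing n
          have hp3 : 3 ≤ p := by
            have h2 := hp.two_le
            omega
          suffices hs : p^m ∣ a * b * c from hs.trans (dvd_mul_left _ 2)
          by_cases h1 : p ∣ j + 1
          · -- use a via LB2
            have hcoef : ¬ p ∣ ((n+1-j) * (n-j)) := by
              intro h
              rcases (Nat.Prime.dvd_mul hp).mp h with h' | h'
              · have h2 : p ∣ (n+1-j) + (j+1) := Nat.dvd_add h' h1
                rw [show (n+1-j)+(j+1) = n+2 by omega] at h2
                have h3 : p ∣ (n+2) - n := Nat.dvd_sub h2 hdvd2
                rw [show n+2-n = 2 by omega] at h3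
                have := Nat.le_of_dvd (by norm_num) h3
                omega
              · have h2 : p ∣ n - (n-j) := Nat.dvd_sub hdvd2 h'
                rw [show n-(n-j) = j by omega] at h2
                have h3 : p ∣ (j+1) - j := Nat.dvd_sub h1 h2
                rw [show j+1-j = 1 by omega] at h3
                have := Nat.le_of_dvd one_pos h3
                omega
            have ha : p^m ∣ a := extract hp hpm (LB2 n j hn) hcoef
            exact ha.trans ⟨b*c, by ring⟩
          · by_cases h2 : p ∣ j + 2
            · -- use b; j ≥ 1 since p ≥ 3
              have hj1 : 1 ≤ j := by
                have := Nat.le_of_dvd (by omega) h2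
                omega
              have hbid : b * ((j+1) * j) = n * ((n+1) * ((n-1).choose (j-1))) := by
                have h5 := LA2 n (j-1) hn
                rw [show j-1+2 = j+1 by omega, show j-1+1 = j by omega] at h5
                exact h5
              have hcoef : ¬ p ∣ ((j+1) * j) := by
                intro h
                rcases (Nat.Prime.dvd_mul hp).mp h with h' | h'
                · exact h1 h'
                · have h3 : p ∣ (j+2) - j := Nat.dvd_sub h2 h'
                  rw [show j+2-j = 2 by omega] at h3
                  have := Nat.le_of_dvd (by norm_num) h3
                  omega
              have hb : p^m ∣ b := extract hp hpm hbid hcoef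
              exact hb.trans ⟨a*c, by ring⟩
            · -- use c
              have hcoef : ¬ p ∣ ((j+2) * (j+1)) := by
                intro h
                rcases (Nat.Prime.dvd_mul hp).mp h with h' | h' <;>
                  [exact h2 h'; exact h1 h']
              have hc : p^m ∣ c := extract hp hpm (LA2 n j hn) hcoef
              exact hc.trans ⟨a*b, by ring⟩
      · -- p divides neither n nor n+1
        have hm0 : m = 0 := by
          rw [hm_def]; exact Nat.factorization_eq_zero_of_not_dvd hdvd2
        rw [hm0, pow_zero]
        exact one_dvd _
  rw [← Nat.factorization_le_iff_dvd hD0 hN0, Finsupp.le_def]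
  intro p
  by_cases hp : p.Prime
  · rw [← Nat.Prime.pow_dvd_iff_le_factorization hp hN0]
    have hfac : (n * (n+1)^2).factorization p
        = n.factorization p + 2 * (n+1).factorization p := by
      rw [Nat.factorization_mul (by omega) (pow_ne_zero 2 (by omega)),
        Nat.factorization_pow]
      simp
    rw [hfac]
    exact key p hp
  · rw [Nat.factorization_eq_zero_of_not_prime _ hp]
    exact Nat.zero_le _
end

section
/- The number of sequences (w_1,…,w_n) with each w_j ∈ {+1,−1} such that all partial sums w_1+⋯+w_j ≥ 0 (for 1 ≤ j ≤ n) equals the central binomial coefficient \binom{n}{⌊n/2⌋}. -/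
open Finset

namespace CardPS

def bval (b : Bool) : ℤ := if b then 1 else -1

def ps {n : ℕ} (v : Fin n → Bool) (j : Fin n) : ℤ :=
  ∑ i ∈ Finset.univ.filter (· ≤ j), bval (v i)

def tot {n : ℕ} (v : Fin n → Bool) : ℤ := ∑ i, bval (v i)

def Good {n : ℕ} (v : Fin n → Bool) : Prop := ∀ j, 0 ≤ ps v j

instance {n : ℕ} : DecidablePred (Good (n := n)) := fun v => by
  unfold Good; infer_instance

def c (n : ℕ) (k : ℤ) : ℕ :=
  (Finset.univ.filter (fun v : Fin n → Bool => Good v ∧ tot v = k)).card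

def m (n : ℕ) : ℕ := (Finset.univ.filter (fun v : Fin n → Bool => Good v)).card

lemma filter_le_castSucc {n : ℕ} (j : Fin n) :
    (Finset.univ.filter (· ≤ j.castSucc) : Finset (Fin (n+1))) =
      (Finset.univ.filter (· ≤ j)).map Fin.castSuccEmb := by
  ext i
  simp only [mem_filter, mem_univ, true_and, mem_map, Fin.castSuccEmb, Fin.castAddEmb]
  constructor
  · intro hi
    have hi' : i.val ≤ j.val := hi
    have hlt : i.val < n := lt_of_le_of_lt hi' j.isLt
    exact ⟨⟨i.val, hlt⟩, hi', by ext; simp [Fin.castSucc, Fin.castAdd, Fin.castLE]⟩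
  · rintro ⟨a, ha, rfl⟩
    exact ha

lemma ps_snoc_castSucc {n : ℕ} (v : Fin n → Bool) (b : Bool) (j : Fin n) :
    ps (Fin.snoc v b) j.castSucc = ps v j := by
  rw [ps, filter_le_castSucc, Finset.sum_map]
  refine Finset.sum_congr rfl fun i _ => ?_
  rw [show (Fin.castSuccEmb i : Fin (n+1)) = i.castSucc from rfl, Fin.snoc_castSucc]

lemma ps_last {n : ℕ} (v : Fin (n+1) → Bool) :
    ps v (Fin.last n) = tot v := by
  rw [ps, tot]
  congr 1
  ext i
  simp [Fin.le_last]

lemma tot_snoc {n : ℕ} (v : Fin n → Bool) (b : Bool) :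
    tot (Fin.snoc v b) = tot v + bval b := by
  rw [tot, tot, Fin.sum_univ_castSucc]
  simp [Fin.snoc_castSucc]

lemma good_snoc {n : ℕ} (v : Fin n → Bool) (b : Bool) :
    Good (Fin.snoc v b) ↔ Good v ∧ 0 ≤ tot v + bval b := by
  constructor
  · intro h
    refine ⟨fun j => ?_, ?_⟩
    · have := h j.castSucc
      rwa [ps_snoc_castSucc] at this
    · have := h (Fin.last n)
      rwa [ps_last, tot_snoc] at this
  · rintro ⟨hg, ht⟩ j
    induction j using Fin.lastCases with
    | last => rwa [ps_last, tot_snoc]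
    | cast j => rw [ps_snoc_castSucc]; exact hg j


lemma c_zero (k : ℤ) : c 0 k = if k = 0 then 1 else 0 := by
  rw [c]
  rcases eq_or_ne k 0 with rfl | hk
  · rw [if_pos rfl]
    rw [Finset.filter_true_of_mem, Finset.card_univ]
    · simp
    · intro v _
      refine ⟨fun j => j.elim0, ?_⟩
      simp [tot]
  · rw [if_neg hk, Finset.card_eq_zero, Finset.filter_eq_empty_iff]
    intro v _
    simp only [not_and]
    intro _
    simpa [tot] using fun h => hk h.symm

lemma good_tot_nonneg {n : ℕ} {v : Fin n → Bool} (hg : Good v) (hn : n ≠ 0) :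
    0 ≤ tot v := by
  obtain ⟨m, rfl⟩ := Nat.exists_eq_succ_of_ne_zero hn
  have := hg (Fin.last m)
  rwa [ps_last] at this

lemma c_neg {n : ℕ} {k : ℤ} (hk : k < 0) : c n k = 0 := by
  rw [c, Finset.card_eq_zero, Finset.filter_eq_empty_iff]
  rintro v _ ⟨hg, ht⟩
  rcases eq_or_ne n 0 with rfl | hn
  · rw [tot] at ht; simp at ht; omega
  · have := good_tot_nonneg hg hn; omega

lemma tot_le {n : ℕ} (v : Fin n → Bool) : tot v ≤ n := by
  calc tot v ≤ ∑ _i : Fin n, (1 : ℤ) := by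
        refine Finset.sum_le_sum fun i _ => ?_
        rw [bval]; split <;> norm_num
    _ = n := by simp

lemma c_gt {n : ℕ} {k : ℤ} (h : (n : ℤ) < k) : c n k = 0 := by
  rw [c, Finset.card_eq_zero, Finset.filter_eq_empty_iff]
  rintro v _ ⟨hg, ht⟩
  have := tot_le v; omega

lemma tot_parity {n : ℕ} (v : Fin n → Bool) : 2 ∣ (n : ℤ) - tot v := by
  have : (n : ℤ) - tot v = ∑ i : Fin n, (1 - bval (v i)) := by
    rw [tot, Finset.sum_sub_distrib]; simp
  rw [this]
  refine Finset.dvd_sum fun i _ => ?_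
  rw [bval]; split <;> norm_num

lemma c_odd {n : ℕ} {k : ℤ} (h : ¬ (2 ∣ (n : ℤ) - k)) : c n k = 0 := by
  rw [c, Finset.card_eq_zero, Finset.filter_eq_empty_iff]
  rintro v _ ⟨hg, ht⟩
  exact h (ht ▸ tot_parity v)

lemma card_branch (n : ℕ) (k : ℤ) (b : Bool) (hk : 0 ≤ k) :
    (Finset.univ.filter (fun v : Fin (n+1) → Bool =>
      (Good v ∧ tot v = k) ∧ v (Fin.last n) = b)).card = c n (k - bval b) := by
  rw [c]
  refine Finset.card_nbij' (fun v => Fin.init v) (fun u => Fin.snoc u b) ?_ ?_ ?_ ?_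
  · intro v hv
    simp only [Finset.mem_coe, Finset.mem_filter, Finset.mem_univ, true_and] at hv ⊢
    obtain ⟨⟨hg, ht⟩, hl⟩ := hv
    have hv' : v = Fin.snoc (Fin.init v) b := by rw [← hl, Fin.snoc_init_self]
    have hgs : Good (Fin.snoc (Fin.init v) b) := by rw [← hv']; exact hg
    have hts : tot (Fin.snoc (Fin.init v) b) = k := by rw [← hv']; exact ht
    rw [good_snoc] at hgs
    rw [tot_snoc] at hts
    exact ⟨hgs.1, by omega⟩
  · intro u hu
    simp only [Finset.mem_coe, Finset.mem_filter, Finset.mem_univ, true_and] at hu ⊢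
    obtain ⟨hg, ht⟩ := hu
    refine ⟨⟨(good_snoc u b).mpr ⟨hg, by omega⟩, by rw [tot_snoc]; omega⟩, ?_⟩
    simp
  · intro v hv
    simp only [Finset.mem_coe, Finset.mem_filter, Finset.mem_univ, true_and] at hv
    rw [← hv.2]
    exact Fin.snoc_init_self v
  · rintro u _
    simp

lemma c_succ (n : ℕ) (k : ℤ) (hk : 0 ≤ k) : c (n+1) k = c n (k-1) + c n (k+1) := by
  rw [c]
  rw [← Finset.card_filter_add_card_filter_not
    (p := fun v : Fin (n+1) → Bool => v (Fin.last n) = true), Finset.filter_filter,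
    Finset.filter_filter]
  have h1 := card_branch n k true hk
  have h2 := card_branch n k false hk
  have e1 : k - bval true = k - 1 := by norm_num [bval]
  have e2 : k - bval false = k + 1 := by norm_num [bval]
  rw [e1] at h1
  rw [e2] at h2
  have h2' : #(Finset.univ.filter (fun a : Fin (n+1) → Bool =>
      (Good a ∧ tot a = k) ∧ ¬ a (Fin.last n) = true)) = c n (k + 1) := by
    rw [← h2]
    congr 1
    apply Finset.filter_congr
    intro v _
    simp [Bool.not_eq_true]
  rw [h1, h2']



lemma c_closed : ∀ n m : ℕ, 2*m ≤ n →
    c n ((n:ℤ) - 2*m) + n.choose (n - m + 1) = n.choose m := by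
  intro n
  induction n with
  | zero =>
    intro m hm
    have : m = 0 := by omega
    subst this
    simp [c_zero]
  | succ n ih =>
    intro m hm
    match m with
    | 0 =>
      rw [show ((n+1:ℕ):ℤ) - 2*((0:ℕ):ℤ) = ((n:ℤ)+1) from by push_cast; ring,
          c_succ n ((n:ℤ)+1) (by positivity),
          show (n:ℤ)+1-1 = ((n:ℤ) - 2*((0:ℕ):ℤ)) from by push_cast; ring,
          show (n:ℤ)+1+1 = ((n:ℤ)+2) from by ring]
      have h2 : c n ((n:ℤ)+2) = 0 := c_gt (by omega)
      have h1 := ih 0 (by omega)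
      have z1 : n.choose (n - 0 + 1) = 0 := Nat.choose_eq_zero_of_lt (by omega)
      have z2 : (n+1).choose (n+1-0+1) = 0 := Nat.choose_eq_zero_of_lt (by omega)
      rw [z2, h2]
      rw [z1] at h1
      simp only [Nat.choose_zero_right] at h1 ⊢
      omega
    | m' + 1 =>
      rcases Nat.lt_or_ge n (2*(m'+1)) with hlt | hle
      · -- n = 2*m'+1
        have hn : n = 2*m' + 1 := by omega
        subst hn
        rw [show ((2*m'+1+1:ℕ):ℤ) - 2*((m'+1:ℕ):ℤ) = (0:ℤ) from by push_cast; ring,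
            c_succ _ 0 le_rfl,
            show (0:ℤ)-1 = (-1:ℤ) from by ring,
            show (0:ℤ)+1 = ((2*m'+1:ℕ):ℤ) - 2*((m':ℕ):ℤ) from by push_cast; ring,
            c_neg (show (-1:ℤ) < 0 from by norm_num)]
        have ih2 := ih m' (by omega)
        have e3 : 2*m'+1 - m' + 1 = m' + 2 := by omega
        rw [e3] at ih2
        have e4 : 2*m'+1+1 - (m'+1) + 1 = m' + 2 := by omega
        rw [e4]
        have p1 : (2*m'+1+1).choose (m'+2) = (2*m'+1).choose (m'+1) + (2*m'+1).choose (m'+2) :=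
          Nat.choose_succ_succ' (2*m'+1) (m'+1)
        have p2 : (2*m'+1+1).choose (m'+1) = (2*m'+1).choose m' + (2*m'+1).choose (m'+1) :=
          Nat.choose_succ_succ' (2*m'+1) m'
        have sym : (2*m'+1).choose (m'+1) = (2*m'+1).choose m' := by
          have h := Nat.choose_symm (show m' ≤ 2*m'+1 by omega)
          have e5 : 2*m'+1 - m' = m' + 1 := by omega
          rw [e5] at h
          omega
        omega
      · rw [show ((n+1:ℕ):ℤ) - 2*((m'+1:ℕ):ℤ) = ((n:ℤ)+1-2*m'-2) from by push_cast; ring,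
            c_succ n _ (by push_cast; omega),
            show (n:ℤ)+1-2*(m':ℕ)-2-1 = ((n:ℤ) - 2*((m'+1:ℕ):ℤ)) from by push_cast; ring,
            show (n:ℤ)+1-2*(m':ℕ)-2+1 = ((n:ℤ) - 2*((m':ℕ):ℤ)) from by push_cast; ring]
        have ih1 := ih (m'+1) hle
        have ih2 := ih m' (by omega)
        have e3 : n - (m'+1) + 1 = n - m' := by omega
        rw [e3] at ih1
        have e4 : n + 1 - (m'+1) + 1 = n - m' + 1 := by omega
        rw [e4]
        have p1 : (n+1).choose (m'+1) = n.choose m' + n.choose (m'+1) :=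
          Nat.choose_succ_succ' n m'
        have p2 : (n+1).choose (n - m' + 1) = n.choose (n - m') + n.choose (n - m' + 1) :=
          Nat.choose_succ_succ' n (n - m')
        omega

lemma neg_le_tot {n : ℕ} (v : Fin n → Bool) : -(n:ℤ) ≤ tot v := by
  calc -(n:ℤ) = ∑ _i : Fin n, (-1 : ℤ) := by simp
    _ ≤ tot v := by
        refine Finset.sum_le_sum fun i _ => ?_
        rw [bval]; split <;> norm_num

lemma m_eq_sum (n : ℕ) : m n = ∑ k ∈ Finset.Icc (-(n:ℤ)) (n:ℤ), c n k := by
  rw [m, Finset.card_eq_sum_card_fiberwise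
    (f := tot) (t := Finset.Icc (-(n:ℤ)) (n:ℤ))
    (fun v _ => Finset.mem_Icc.mpr ⟨neg_le_tot v, tot_le v⟩)]
  refine Finset.sum_congr rfl fun k _ => ?_
  rw [c, Finset.filter_filter]

lemma sum_eq_range (n : ℕ) :
    ∑ k ∈ Finset.Icc (-(n:ℤ)) (n:ℤ), c n k
      = ∑ j ∈ Finset.range (n+1), c n ((n:ℤ) - 2*j) := by
  have himg : (Finset.range (n+1)).image (fun j : ℕ => (n:ℤ) - 2*j)
      ⊆ Finset.Icc (-(n:ℤ)) (n:ℤ) := by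
    intro k hk
    simp only [Finset.mem_image, Finset.mem_range] at hk
    obtain ⟨j, hj, rfl⟩ := hk
    rw [Finset.mem_Icc]
    constructor <;> [push_cast; push_cast] <;> omega
  have hvan : ∀ k ∈ Finset.Icc (-(n:ℤ)) (n:ℤ),
      k ∉ (Finset.range (n+1)).image (fun j : ℕ => (n:ℤ) - 2*j) → c n k = 0 := by
    intro k hk hnk
    rw [Finset.mem_Icc] at hk
    rcases em (2 ∣ (n:ℤ) - k) with ⟨j, hj⟩ | hd
    · exfalso
      apply hnk
      simp only [Finset.mem_image, Finset.mem_range]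
      refine ⟨j.toNat, ?_, ?_⟩
      · omega
      · have : (j.toNat : ℤ) = j := Int.toNat_of_nonneg (by omega)
        omega
    · exact c_odd hd
  rw [← Finset.sum_subset himg hvan, Finset.sum_image]
  intro x _ y _ h
  have h' : (n:ℤ) - 2*(x:ℤ) = (n:ℤ) - 2*(y:ℤ) := h
  omega

lemma sum_tel (n : ℕ) : ∀ N, 2*N ≤ n →
    ∑ j ∈ Finset.range (N+1), c n ((n:ℤ) - 2*j) = n.choose N := by
  intro N
  induction N with
  | zero =>
    intro _
    rw [Finset.sum_range_one]
    have h := c_closed n 0 (by omega)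
    have z : n.choose (n - 0 + 1) = 0 := Nat.choose_eq_zero_of_lt (by omega)
    rw [z] at h
    simpa using h
  | succ N ih =>
    intro hN
    rw [Finset.sum_range_succ, ih (by omega)]
    have h := c_closed n (N+1) hN
    have e : n - (N+1) + 1 = n - N := by omega
    rw [e] at h
    have sym : n.choose (n - N) = n.choose N := Nat.choose_symm (by omega)
    omega

lemma m_choose (n : ℕ) : m n = n.choose (n / 2) := by
  rw [m_eq_sum, sum_eq_range]
  rw [← Finset.sum_subset (Finset.range_subset_range.mpr (show n/2+1 ≤ n+1 by omega))
    (fun j _ hj => c_neg (show (n:ℤ) - 2*j < 0 by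
      simp only [Finset.mem_range, not_lt] at hj
      push_cast
      omega))]
  exact sum_tel n (n/2) (by omega)

end CardPS

/-- The number of ±1 sequences of length `n` with all partial sums nonnegative
equals the central binomial coefficient `C(n, ⌊n/2⌋)`. -/
theorem card_nonneg_partial_sum_sequences (n : ℕ) :
    Nat.card {w : Fin n → ℤ // (∀ j, w j = 1 ∨ w j = -1) ∧
      ∀ j : Fin n, 0 ≤ ∑ i ∈ Finset.univ.filter (· ≤ j), w i} = n.choose (n / 2) := by
  classical
  have key : ∀ (w : Fin n → ℤ), (∀ j, w j = 1 ∨ w j = -1) →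
      ∀ i, CardPS.bval (decide (w i = 1)) = w i := by
    intro w hw i
    rcases hw i with h | h <;> simp [h, CardPS.bval]
  have e : {w : Fin n → ℤ // (∀ j, w j = 1 ∨ w j = -1) ∧
      ∀ j : Fin n, 0 ≤ ∑ i ∈ Finset.univ.filter (· ≤ j), w i}
      ≃ {v : Fin n → Bool // CardPS.Good v} :=
    { toFun := fun w => ⟨fun j => decide (w.1 j = 1), by
        intro j
        rw [CardPS.ps]
        rw [Finset.sum_congr rfl (fun i _ => key w.1 w.2.1 i)]
        exact w.2.2 j⟩
      invFun := fun v => ⟨fun j => CardPS.bval (v.1 j), by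
        constructor
        · intro j
          cases v.1 j <;> simp [CardPS.bval]
        · intro j
          have := v.2 j
          rwa [CardPS.ps] at this⟩
      left_inv := fun w => Subtype.ext (funext fun j => key w.1 w.2.1 j)
      right_inv := fun v => Subtype.ext (funext fun j => by
        cases h : v.1 j <;> simp [h, CardPS.bval]) }
  rw [Nat.card_congr e, Nat.card_eq_fintype_card, Fintype.card_subtype]
  exact CardPS.m_choose n
end

section
/- The number of standard Young tableaux of size n with at most 2 rows equals \binom{n}{⌊n/2⌋}. -/
open Finset Fin

/-- prefix-count condition: ballot property -/
def Pp {m : ℕ} (f : Fin m → Fin 2) : Prop := ∀ j : Fin m,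
  (Finset.univ.filter (fun i => i ≤ j ∧ f i = 1)).card ≤
    (Finset.univ.filter (fun i => i ≤ j ∧ f i = (0 : Fin 2))).card

/-- number of zeros -/
def Zc {m : ℕ} (f : Fin m → Fin 2) : ℕ :=
  (Finset.univ.filter (fun i => f i = (0 : Fin 2))).card

noncomputable def M (n k : ℕ) : ℕ := Nat.card {f : Fin n → Fin 2 // Pp f ∧ Zc f = k}

lemma fin2_cases (a : Fin 2) : a = 0 ∨ a = 1 := by omega

lemma cnt_snoc_castSucc {n : ℕ} (g : Fin n → Fin 2) (x c : Fin 2) (j : Fin n) :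
    (Finset.univ.filter (fun i : Fin (n+1) => i ≤ j.castSucc ∧ (Fin.snoc g x : Fin (n+1) → Fin 2) i = c)).card =
      (Finset.univ.filter (fun i : Fin n => i ≤ j ∧ g i = c)).card := by
  classical
  rw [Finset.card_filter, Finset.card_filter, Fin.sum_univ_castSucc]
  have h1 : ¬ (Fin.last n ≤ j.castSucc) := by
    exact not_le.2 (Fin.castSucc_lt_last j)
  simp [h1, Fin.castSucc_le_castSucc_iff, Fin.snoc_castSucc]

lemma cnt_snoc_last {n : ℕ} (g : Fin n → Fin 2) (x c : Fin 2) :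
    (Finset.univ.filter (fun i : Fin (n+1) => i ≤ Fin.last n ∧ (Fin.snoc g x : Fin (n+1) → Fin 2) i = c)).card =
      (Finset.univ.filter (fun i : Fin n => g i = c)).card + (if x = c then 1 else 0) := by
  classical
  rw [Finset.card_filter, Finset.card_filter, Fin.sum_univ_castSucc]
  simp [Fin.le_last, Fin.snoc_castSucc]

lemma Zc_snoc {n : ℕ} (g : Fin n → Fin 2) (x : Fin 2) :
    Zc (Fin.snoc g x) = Zc g + (if x = 0 then 1 else 0) := by
  classical
  unfold Zc
  rw [Finset.card_filter, Finset.card_filter, Fin.sum_univ_castSucc]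
  simp [Fin.snoc_castSucc]

lemma ones_count {m : ℕ} (f : Fin m → Fin 2) :
    (Finset.univ.filter (fun i => f i = (1 : Fin 2))).card + Zc f = m := by
  classical
  unfold Zc
  have h := Finset.card_filter_add_card_filter_not
    (s := (Finset.univ : Finset (Fin m))) (p := fun i => f i = (1 : Fin 2))
  have h2 : (Finset.univ.filter (fun i => ¬ f i = (1 : Fin 2))) =
      (Finset.univ.filter (fun i => f i = (0 : Fin 2))) := by
    apply Finset.filter_congr
    intro i _
    rcases fin2_cases (f i) with h | h <;> simp [h]
  rw [h2] at h
  simpa using h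

lemma cond_last {n : ℕ} (f : Fin (n+1) → Fin 2) :
    ((Finset.univ.filter (fun i => i ≤ Fin.last n ∧ f i = 1)).card ≤
      (Finset.univ.filter (fun i => i ≤ Fin.last n ∧ f i = (0 : Fin 2))).card) ↔
      n + 1 ≤ 2 * Zc f := by
  classical
  have h1 : ∀ c : Fin 2, (Finset.univ.filter (fun i => i ≤ Fin.last n ∧ f i = c)) =
      (Finset.univ.filter (fun i => f i = c)) := by
    intro c; apply Finset.filter_congr; intro i _; simp [Fin.le_last]
  rw [h1, h1]
  have := ones_count f
  unfold Zc at *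
  omega

lemma Pp_snoc {n : ℕ} (g : Fin n → Fin 2) (x : Fin 2) :
    Pp (Fin.snoc g x) ↔ Pp g ∧ n + 1 ≤ 2 * Zc (Fin.snoc g x) := by
  constructor
  · intro h
    refine ⟨fun j => ?_, (cond_last _).1 (h (Fin.last n))⟩
    have := h j.castSucc
    rwa [cnt_snoc_castSucc, cnt_snoc_castSucc] at this
  · rintro ⟨h1, h2⟩ j
    induction j using Fin.lastCases with
    | last => exact (cond_last _).2 h2
    | cast j => rw [cnt_snoc_castSucc, cnt_snoc_castSucc]; exact h1 j

/-- splitting equivalence by the last value -/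
noncomputable def snocSplit (n : ℕ) (Q : (Fin (n+1) → Fin 2) → Prop) :
    {f : Fin (n+1) → Fin 2 // Q f} ≃
      {g : Fin n → Fin 2 // Q (Fin.snoc g 0)} ⊕ {g : Fin n → Fin 2 // Q (Fin.snoc g 1)} where
  toFun f := if hx : f.1 (Fin.last n) = 0 then
      Sum.inl ⟨Fin.init f.1, by
        have h := Fin.snoc_init_self f.1
        rw [hx] at h
        rw [h]; exact f.2⟩
    else
      Sum.inr ⟨Fin.init f.1, by
        have hx1 : f.1 (Fin.last n) = 1 := by omega
        have h := Fin.snoc_init_self f.1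
        rw [hx1] at h
        rw [h]; exact f.2⟩
  invFun s := match s with
    | Sum.inl g => ⟨(Fin.snoc g.1 0 : Fin (n+1) → Fin 2), g.2⟩
    | Sum.inr g => ⟨(Fin.snoc g.1 1 : Fin (n+1) → Fin 2), g.2⟩
  left_inv := by
    rintro ⟨f, hf⟩
    by_cases hx : f (Fin.last n) = 0
    · simp only [hx, dif_pos]
      refine Subtype.ext ?_
      have h := Fin.snoc_init_self f
      rw [hx] at h
      exact h
    · have hx1 : f (Fin.last n) = 1 := by omega
      simp only [hx, dif_neg, not_false_iff]
      refine Subtype.ext ?_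
      have h := Fin.snoc_init_self f
      rw [hx1] at h
      exact h
  right_inv := by
    rintro (⟨g, hg⟩ | ⟨g, hg⟩)
    · have h0 : (Fin.snoc g 0 : Fin (n+1) → Fin 2) (Fin.last n) = 0 := by simp
      simp only [h0, dif_pos]
      congr 1
      apply Subtype.ext
      show Fin.init (Fin.snoc g 0 : Fin (n+1) → Fin 2) = g
      exact Fin.init_snoc _ _
    · have h1 : (Fin.snoc g 1 : Fin (n+1) → Fin 2) (Fin.last n) = 1 := by simp
      have h0 : ¬ ((Fin.snoc g 1 : Fin (n+1) → Fin 2) (Fin.last n) = 0) := by rw [h1]; decide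
      simp only [h0, dif_neg, not_false_iff]
      congr 1
      apply Subtype.ext
      show Fin.init (Fin.snoc g 1 : Fin (n+1) → Fin 2) = g
      exact Fin.init_snoc _ _

lemma M_zero_of_lt {n k : ℕ} (h : ¬ (n + 1 ≤ 2 * k)) : M (n+1) k = 0 := by
  rw [M, Nat.card_eq_zero]
  left
  constructor
  rintro ⟨f, hP, hZ⟩
  have h2 := (cond_last f).1 (hP (Fin.last n))
  omega

lemma M_succ_succ {n k : ℕ} (h : n + 1 ≤ 2 * (k+1)) :
    M (n+1) (k+1) = M n k + M n (k+1) := by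
  rw [M, Nat.card_congr (snocSplit n _), Nat.card_sum]
  congr 1
  · rw [M]
    apply Nat.card_congr
    apply Equiv.subtypeEquivRight
    intro g
    have hz : Zc (Fin.snoc g 0 : Fin (n+1) → Fin 2) = Zc g + 1 := by
      rw [Zc_snoc]; norm_num
    rw [Pp_snoc, hz]
    constructor
    · rintro ⟨⟨h1, _⟩, h3⟩; exact ⟨h1, by omega⟩
    · rintro ⟨h1, h2⟩; exact ⟨⟨h1, by omega⟩, by omega⟩
  · rw [M]
    apply Nat.card_congr
    apply Equiv.subtypeEquivRight
    intro g
    have hz : Zc (Fin.snoc g 1 : Fin (n+1) → Fin 2) = Zc g := by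
      rw [Zc_snoc]; norm_num
    rw [Pp_snoc, hz]
    constructor
    · rintro ⟨⟨h1, _⟩, h3⟩; exact ⟨h1, by omega⟩
    · rintro ⟨h1, h2⟩; exact ⟨⟨h1, by omega⟩, by omega⟩

lemma choose_anti {n k : ℕ} (h : n ≤ 2 * k) : n.choose (k+1) ≤ n.choose k := by
  by_cases hk : n ≤ k
  · rcases Nat.lt_or_ge k n with h' | h'
    · omega
    · simp [Nat.choose_eq_zero_of_lt (by omega : n < k + 1)]
  · push_neg at hk
    have hmul := Nat.choose_succ_right_eq n k
    have h1 : n - k ≤ k + 1 := by omega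
    have h2 : n.choose k * (n - k) ≤ n.choose k * (k+1) := Nat.mul_le_mul_left _ h1
    have h3 : n.choose (k+1) * (k+1) ≤ n.choose k * (k+1) := by omega
    exact Nat.le_of_mul_le_mul_right h3 (by omega)

lemma M_closed (n : ℕ) : ∀ k, M n k = if n ≤ 2 * k then n.choose k - n.choose (k+1) else 0 := by
  induction n with
  | zero =>
    intro k
    have : M 0 k = if k = 0 then 1 else 0 := by
      rw [M]
      rcases Nat.eq_zero_or_pos k with rfl | hk
      · rw [if_pos rfl, Nat.card_eq_one_iff_unique]
        constructor
        · constructor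
          rintro ⟨f, hf⟩ ⟨g, hg⟩
          exact Subtype.ext (funext fun i => i.elim0)
        · exact ⟨⟨fun i => i.elim0, fun j => j.elim0, by simp [Zc]⟩⟩
      · rw [if_neg (by omega), Nat.card_eq_zero]
        left
        constructor
        rintro ⟨f, hP, hZ⟩
        have : Zc f ≤ 0 := by
          unfold Zc
          calc (Finset.univ.filter _).card ≤ (Finset.univ : Finset (Fin 0)).card :=
                Finset.card_filter_le _ _
            _ = 0 := by simp
        omega
    rw [this]
    rcases Nat.eq_zero_or_pos k with rfl | hk
    · simp
    · rw [if_neg (by omega), if_pos (by omega)]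
      have : Nat.choose 0 k = 0 := Nat.choose_eq_zero_of_lt (by omega)
      have : Nat.choose 0 (k+1) = 0 := Nat.choose_eq_zero_of_lt (by omega)
      omega
  | succ n ih =>
    intro k
    by_cases h : n + 1 ≤ 2 * k
    · rw [if_pos h]
      obtain ⟨k', rfl⟩ : ∃ k', k = k' + 1 := ⟨k - 1, by omega⟩
      rw [M_succ_succ h, ih k', ih (k'+1)]
      have hp1 : (n+1).choose (k'+1) = n.choose k' + n.choose (k'+1) :=
        Nat.choose_succ_succ n k'
      have hp2 : (n+1).choose (k'+1+1) = n.choose (k'+1) + n.choose (k'+1+1) :=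
        Nat.choose_succ_succ n (k'+1)
      rw [if_pos (by omega : n ≤ 2 * (k'+1))]
      by_cases h' : n ≤ 2 * k'
      · rw [if_pos h']
        have a1 : n.choose (k'+1) ≤ n.choose k' := choose_anti h'
        have a2 : n.choose (k'+1+1) ≤ n.choose (k'+1) := choose_anti (by omega : n ≤ 2 * (k'+1))
        omega
      · rw [if_neg h']
        have hn : n = 2 * k' + 1 := by omega
        have hsymm : n.choose k' = n.choose (k'+1) := by
          have h5 : n - (k'+1) = k' := by omega
          calc n.choose k' = n.choose (n - (k'+1)) := by rw [h5]
            _ = n.choose (k'+1) := Nat.choose_symm (by omega)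
        have a2 : n.choose (k'+1+1) ≤ n.choose (k'+1) := choose_anti (by omega : n ≤ 2 * (k'+1))
        omega
    · rw [if_neg h]
      exact M_zero_of_lt h

lemma card_eq_sum_M (n : ℕ) :
    Nat.card {f : Fin n → Fin 2 // Pp f} = ∑ k ∈ Finset.range (n+1), M n k := by
  classical
  have hZ : ∀ f : Fin n → Fin 2, Zc f < n + 1 := by
    intro f
    have : Zc f ≤ n := by
      unfold Zc
      calc (Finset.univ.filter _).card ≤ (Finset.univ : Finset (Fin n)).card :=
            Finset.card_filter_le _ _
        _ = n := by simp
    omega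
  have e : {f : Fin n → Fin 2 // Pp f} ≃
      Σ k : Fin (n+1), {f : Fin n → Fin 2 // Pp f ∧ Zc f = (k : ℕ)} :=
    { toFun := fun f => ⟨⟨Zc f.1, hZ f.1⟩, ⟨f.1, f.2, rfl⟩⟩
      invFun := fun s => ⟨s.2.1, s.2.2.1⟩
      left_inv := by rintro ⟨f, hf⟩; rfl
      right_inv := by
        rintro ⟨⟨kv, hk⟩, f, hf, hZf⟩
        simp only at hZf
        subst hZf
        rfl }
  rw [Nat.card_congr e]
  letI : ∀ k : Fin (n+1), Fintype {f : Fin n → Fin 2 // Pp f ∧ Zc f = (k : ℕ)} :=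
    fun k => Fintype.ofFinite _
  rw [Nat.card_eq_fintype_card, Fintype.card_sigma]
  rw [← Fin.sum_univ_eq_sum_range (fun k => M n k) (n+1)]
  apply Finset.sum_congr rfl
  intro k _
  rw [M, Nat.card_eq_fintype_card]

lemma telescope (n : ℕ) :
    ∑ k ∈ Finset.range (n+1), (if n ≤ 2 * k then n.choose k - n.choose (k+1) else 0)
      = n.choose ((n+1)/2) := by
  classical
  set c := (n+1)/2 with hc
  rw [Finset.sum_ite, Finset.sum_const, smul_zero, add_zero]
  have hfilter : (Finset.range (n+1)).filter (fun k => n ≤ 2 * k) = Finset.Ico c (n+1) := by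
    ext k
    simp only [Finset.mem_filter, Finset.mem_range, Finset.mem_Ico]
    omega
  rw [hfilter]
  have hcle : c ≤ n + 1 := by omega
  have key : (↑(∑ k ∈ Finset.Ico c (n+1), (n.choose k - n.choose (k+1))) : ℤ)
      = ((n.choose c : ℤ)) := by
    rw [Nat.cast_sum]
    have : ∀ k ∈ Finset.Ico c (n+1),
        (↑(n.choose k - n.choose (k+1)) : ℤ) = (n.choose k : ℤ) - n.choose (k+1) := by
      intro k hk
      simp only [Finset.mem_Ico] at hk
      rw [Nat.cast_sub (choose_anti (by omega))]
    rw [Finset.sum_congr rfl this]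
    rw [Finset.sum_Ico_eq_sum_range]
    have := Finset.sum_range_sub' (fun i => ((n.choose (c + i)) : ℤ)) (n + 1 - c)
    simp only [add_assoc]
    rw [this]
    have : c + (n + 1 - c) = n + 1 := by omega
    rw [this, Nat.choose_eq_zero_of_lt (by omega : n < n + 1)]
    ring_nf
  exact_mod_cast key

/-- The number of standard Young tableaux of size `n` with at most 2 rows
(encoded as lattice words / ballot sequences: `f j` is the row containing
entry `j`, and every prefix has at least as many first-row entries as
second-row entries) equals `C(n, ⌊n/2⌋)`. -/
theorem card_syt_two_rows (n : ℕ) :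
    Nat.card {f : Fin n → Fin 2 // ∀ j : Fin n,
      (Finset.univ.filter (fun i => i ≤ j ∧ f i = 1)).card ≤
        (Finset.univ.filter (fun i => i ≤ j ∧ f i = (0 : Fin 2))).card}
      = n.choose (n / 2) := by
  have h1 : Nat.card {f : Fin n → Fin 2 // Pp f} = n.choose ((n+1)/2) := by
    rw [card_eq_sum_M]
    rw [Finset.sum_congr rfl (fun k _ => M_closed n k)]
    exact telescope n
  have h2 : n.choose ((n+1)/2) = n.choose (n/2) := by
    rcases Nat.even_or_odd n with ⟨m, rfl⟩ | ⟨m, rfl⟩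
    · congr 1; omega
    · have e1 : (2*m+1+1)/2 = m + 1 := by omega
      have e2 : (2*m+1)/2 = m := by omega
      rw [e1, e2]
      have : 2*m+1 - (m+1) = m := by omega
      calc (2*m+1).choose (m+1) = (2*m+1).choose (2*m+1 - (m+1)) := (Nat.choose_symm (by omega)).symm
        _ = (2*m+1).choose m := by rw [this]
  rw [← h2, ← h1]
  rfl
end

section
/- The number of set partitions of {1,…,n} with no enhanced 2-nesting (i.e., whose arc diagram has no two arcs (i_1,j_1),(i_2,j_2) with i_1 < i_2 ≤ j_2 < j_1) equals the Motzkin number M_n. -/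
open Finset

def A : ℕ → ℕ → ℕ
  | h, 0 => if h = 0 then 1 else 0
  | 0, n+1 => A 1 n + A 0 n
  | h+1, n+1 => A (h+2) n + A (h+1) n + A h n

lemma A_zero_zero : A 0 0 = 1 := rfl

-- double-sum reindex
lemma reindex (f : ℕ → ℕ → ℕ → ℕ) (n : ℕ) :
    ∑ k ∈ range n, ∑ j ∈ range k, f j (k-1-j) (n-1-k)
      = ∑ k ∈ range n, ∑ j ∈ range (n-1-k), f k j (n-2-k-j) := by
  have h1 : ∑ k ∈ range n, ∑ j ∈ range k, f j (k-1-j) (n-1-k)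
      = ∑ p ∈ (range n).sigma (fun k => range k), f p.2 (p.1-1-p.2) (n-1-p.1) := by
    rw [Finset.sum_sigma]
  have h2 : ∑ k ∈ range n, ∑ j ∈ range (n-1-k), f k j (n-2-k-j)
      = ∑ p ∈ (range n).sigma (fun k => range (n-1-k)), f p.1 p.2 (n-2-p.1-p.2) := by
    rw [Finset.sum_sigma]
  rw [h1, h2]
  apply Finset.sum_nbij' (i := fun p => ⟨p.2, p.1-1-p.2⟩)
    (j := fun p => ⟨p.1+p.2+1, p.1⟩)
  · rintro ⟨k, j⟩ hp
    simp only [Finset.mem_sigma, Finset.mem_range] at hp ⊢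
    omega
  · rintro ⟨a, b⟩ hp
    simp only [Finset.mem_sigma, Finset.mem_range] at hp ⊢
    omega
  · rintro ⟨k, j⟩ hp
    simp only [Finset.mem_sigma, Finset.mem_range] at hp
    show (⟨j + (k - 1 - j) + 1, j⟩ : Σ _ : ℕ, ℕ) = ⟨k, j⟩
    have e : j + (k - 1 - j) + 1 = k := by omega
    rw [e]
  · rintro ⟨a, b⟩ hp
    simp only [Finset.mem_sigma, Finset.mem_range] at hp
    show (⟨a, a + b + 1 - 1 - a⟩ : Σ _ : ℕ, ℕ) = ⟨a, b⟩
    have e : a + b + 1 - 1 - a = b := by omega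
    rw [e]
  · rintro ⟨k, j⟩ hp
    simp only [Finset.mem_sigma, Finset.mem_range] at hp
    show f j (k-1-j) (n-1-k) = f j (k-1-j) (n-2-j-(k-1-j))
    congr 1
    omega

lemma sumL : ∀ n h, A (h+1) n = ∑ k ∈ range n, A 0 k * A h (n-1-k) := by
  intro n
  induction n using Nat.strong_induction_on with
  | _ n ih =>
    match n with
    | 0 => intro h; simp [A]
    | n+1 =>
      intro h
      have peel : ∑ k ∈ range (n+1), A 0 k * A h (n+1-1-k)
          = (∑ k ∈ range n, A 0 (k+1) * A h (n-1-k)) + A h n := by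
        rw [Finset.sum_range_succ']
        congr 1
        · apply Finset.sum_congr rfl; intro k hk; congr 2; omega
        · simp [A]
      have expand : ∀ k, A 0 (k+1) = A 1 k + A 0 k := fun k => rfl
      have key : ∑ k ∈ range n, A 1 k * A h (n-1-k) = A (h+2) n := by
        have e1 : ∑ k ∈ range n, A 1 k * A h (n-1-k)
            = ∑ k ∈ range n, ∑ j ∈ range k, A 0 j * A 0 (k-1-j) * A h (n-1-k) := by
          apply Finset.sum_congr rfl
          intro k hk
          rw [ih k (by simp at hk; omega) 0, Finset.sum_mul]
        have e2 : A (h+2) n = ∑ k ∈ range n, ∑ j ∈ range (n-1-k),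
            A 0 k * A 0 j * A h (n-2-k-j) := by
          rw [ih n (by omega) (h+1)]
          apply Finset.sum_congr rfl
          intro k hk
          simp at hk
          rw [ih (n-1-k) (by omega) h, Finset.mul_sum]
          apply Finset.sum_congr rfl
          intro j hj
          simp at hj
          rw [← mul_assoc]
          congr 2
          omega
        rw [e1, e2, reindex (fun a b c => A 0 a * A 0 b * A h c) n]
      have main : ∑ k ∈ range (n+1), A 0 k * A h (n+1-1-k)
          = A (h+2) n + A (h+1) n + A h n := by
        rw [peel]
        have : ∑ k ∈ range n, A 0 (k+1) * A h (n-1-k)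
            = (∑ k ∈ range n, A 1 k * A h (n-1-k)) + ∑ k ∈ range n, A 0 k * A h (n-1-k) := by
          rw [← Finset.sum_add_distrib]
          apply Finset.sum_congr rfl
          intro k hk
          rw [expand, add_mul]
        rw [this, key, ← ih n (by omega) h]
      rw [main]
      rfl

lemma A_eq_M (M : ℕ → ℕ) (hM0 : M 0 = 1)
    (hMrec : ∀ n, M (n+1) = M n + ∑ k ∈ Finset.range n, M k * M (n-1-k)) :
    ∀ n, A 0 n = M n := by
  intro n
  induction n using Nat.strong_induction_on with
  | _ n ih =>
    match n with
    | 0 => simpa [A] using hM0.symm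
    | n+1 =>
      have : A 0 (n+1) = A 1 n + A 0 n := rfl
      rw [this, sumL n 0, hMrec n, ih n (by omega)]
      rw [add_comm (M n)]
      congr 1
      apply Finset.sum_congr rfl
      intro k hk
      simp at hk
      rw [ih k (by omega), ih (n-1-k) (by omega)]


abbrev Stp := Fin 4

def isO (s : Stp) : Prop := s = 0 ∨ s = 2
def isC (s : Stp) : Prop := s = 1 ∨ s = 2

instance : DecidablePred isO := fun s => inferInstanceAs (Decidable (s = 0 ∨ s = 2))
instance : DecidablePred isC := fun s => inferInstanceAs (Decidable (s = 1 ∨ s = 2))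

def cntO {n : ℕ} (t : Fin n → Stp) (v : Fin n) : ℕ :=
  (Finset.univ.filter (fun x => x < v ∧ isO (t x))).card
def cntC {n : ℕ} (t : Fin n → Stp) (v : Fin n) : ℕ :=
  (Finset.univ.filter (fun x => x < v ∧ isC (t x))).card
def totO {n : ℕ} (t : Fin n → Stp) : ℕ :=
  (Finset.univ.filter (fun x => isO (t x))).card
def totC {n : ℕ} (t : Fin n → Stp) : ℕ :=
  (Finset.univ.filter (fun x => isC (t x))).card

def Valid {n : ℕ} (h : ℕ) (t : Fin n → Stp) : Prop :=
  (∀ v, isC (t v) → cntC t v < h + cntO t v) ∧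
  (∀ v, t v = 3 → h + cntO t v = cntC t v) ∧
  h + totO t = totC t

instance {n : ℕ} (h : ℕ) (t : Fin n → Stp) : Decidable (Valid h t) := by
  unfold Valid; infer_instance

lemma cntO_cons_succ {n} (s : Stp) (t : Fin n → Stp) (w : Fin n) :
    cntO (Fin.cons s t) w.succ = (if isO s then 1 else 0) + cntO t w := by
  unfold cntO
  rw [Finset.card_filter, Finset.card_filter, Fin.sum_univ_succ]
  congr 1
  · simp [Fin.succ_pos]
  · apply Finset.sum_congr rfl
    intro x _
    simp [Fin.succ_lt_succ_iff]

lemma cntC_cons_succ {n} (s : Stp) (t : Fin n → Stp) (w : Fin n) :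
    cntC (Fin.cons s t) w.succ = (if isC s then 1 else 0) + cntC t w := by
  unfold cntC
  rw [Finset.card_filter, Finset.card_filter, Fin.sum_univ_succ]
  congr 1
  · simp [Fin.succ_pos]
  · apply Finset.sum_congr rfl
    intro x _
    simp [Fin.succ_lt_succ_iff]

lemma cntO_cons_zero {n} (s : Stp) (t : Fin n → Stp) :
    cntO (Fin.cons s t) 0 = 0 := by
  unfold cntO; simp

lemma cntC_cons_zero {n} (s : Stp) (t : Fin n → Stp) :
    cntC (Fin.cons s t) 0 = 0 := by
  unfold cntC; simp

lemma totO_cons {n} (s : Stp) (t : Fin n → Stp) :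
    totO (Fin.cons s t) = (if isO s then 1 else 0) + totO t := by
  unfold totO
  rw [Finset.card_filter, Finset.card_filter, Fin.sum_univ_succ]
  simp

lemma totC_cons {n} (s : Stp) (t : Fin n → Stp) :
    totC (Fin.cons s t) = (if isC s then 1 else 0) + totC t := by
  unfold totC
  rw [Finset.card_filter, Finset.card_filter, Fin.sum_univ_succ]
  simp

lemma valid_cons_U {n} (h : ℕ) (t : Fin n → Stp) :
    Valid h (Fin.cons 0 t) ↔ Valid (h+1) t := by
  unfold Valid
  rw [Fin.forall_fin_succ, Fin.forall_fin_succ]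
  simp only [Fin.cons_zero, Fin.cons_succ, cntO_cons_succ, cntC_cons_succ,
    cntO_cons_zero, cntC_cons_zero, totO_cons, totC_cons,
    show (if isO (0:Stp) then 1 else 0) = 1 by decide,
    show (if isC (0:Stp) then 1 else 0) = 0 by decide]
  constructor
  · rintro ⟨⟨_, h1⟩, ⟨_, h2⟩, h3⟩
    exact ⟨fun v hv => by have := h1 v hv; omega,
           fun v hv => by have := h2 v hv; omega, by omega⟩
  · rintro ⟨h1, h2, h3⟩
    exact ⟨⟨fun hc => absurd hc (by decide), fun v hv => by have := h1 v hv; omega⟩,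
           ⟨fun hf => absurd hf (by decide), fun v hv => by have := h2 v hv; omega⟩, by omega⟩

lemma valid_cons_B {n} (h : ℕ) (t : Fin n → Stp) :
    Valid h (Fin.cons 2 t) ↔ 0 < h ∧ Valid h t := by
  unfold Valid
  rw [Fin.forall_fin_succ, Fin.forall_fin_succ]
  simp only [Fin.cons_zero, Fin.cons_succ, cntO_cons_succ, cntC_cons_succ,
    cntO_cons_zero, cntC_cons_zero, totO_cons, totC_cons,
    show (if isO (2:Stp) then 1 else 0) = 1 by decide,
    show (if isC (2:Stp) then 1 else 0) = 1 by decide]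
  constructor
  · rintro ⟨⟨g1, h1⟩, ⟨_, h2⟩, h3⟩
    have g : 0 < h := by have := g1 (by decide); omega
    exact ⟨g, fun v hv => by have := h1 v hv; omega,
           fun v hv => by have := h2 v hv; omega, by omega⟩
  · rintro ⟨g, h1, h2, h3⟩
    exact ⟨⟨fun _ => by omega, fun v hv => by have := h1 v hv; omega⟩,
           ⟨fun hf => absurd hf (by decide), fun v hv => by have := h2 v hv; omega⟩, by omega⟩

lemma valid_cons_D {n} (h : ℕ) (t : Fin n → Stp) :
    Valid h (Fin.cons 1 t) ↔ 0 < h ∧ Valid (h-1) t := by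
  unfold Valid
  rw [Fin.forall_fin_succ, Fin.forall_fin_succ]
  simp only [Fin.cons_zero, Fin.cons_succ, cntO_cons_succ, cntC_cons_succ,
    cntO_cons_zero, cntC_cons_zero, totO_cons, totC_cons,
    show (if isO (1:Stp) then 1 else 0) = 0 by decide,
    show (if isC (1:Stp) then 1 else 0) = 1 by decide]
  constructor
  · rintro ⟨⟨g1, h1⟩, ⟨_, h2⟩, h3⟩
    have g : 0 < h := by have := g1 (by decide); omega
    exact ⟨g, fun v hv => by have := h1 v hv; omega,
           fun v hv => by have := h2 v hv; omega, by omega⟩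
  · rintro ⟨g, h1, h2, h3⟩
    exact ⟨⟨fun _ => by omega, fun v hv => by have := h1 v hv; omega⟩,
           ⟨fun hf => absurd hf (by decide), fun v hv => by have := h2 v hv; omega⟩, by omega⟩

lemma valid_cons_F {n} (h : ℕ) (t : Fin n → Stp) :
    Valid h (Fin.cons 3 t) ↔ h = 0 ∧ Valid h t := by
  unfold Valid
  rw [Fin.forall_fin_succ, Fin.forall_fin_succ]
  simp only [Fin.cons_zero, Fin.cons_succ, cntO_cons_succ, cntC_cons_succ,
    cntO_cons_zero, cntC_cons_zero, totO_cons, totC_cons,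
    show (if isO (3:Stp) then 1 else 0) = 0 by decide,
    show (if isC (3:Stp) then 1 else 0) = 0 by decide]
  constructor
  · rintro ⟨⟨_, h1⟩, ⟨g2, h2⟩, h3⟩
    have g : h = 0 := by have := g2 trivial; omega
    exact ⟨g, fun v hv => by have := h1 v hv; omega,
           fun v hv => by have := h2 v hv; omega, by omega⟩
  · rintro ⟨g, h1, h2, h3⟩
    exact ⟨⟨fun hc => absurd hc (by decide), fun v hv => by have := h1 v hv; omega⟩,
           ⟨fun _ => by omega, fun v hv => by have := h2 v hv; omega⟩, by omega⟩

def consSplit {n : ℕ} (h : ℕ) :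
    {t : Fin (n+1) → Stp // Valid h t} ≃
      {p : Stp × (Fin n → Stp) // Valid h (Fin.cons p.1 p.2)} where
  toFun t := ⟨⟨t.1 0, fun i => t.1 i.succ⟩, by
    have : Fin.cons (t.1 0) (fun i => t.1 i.succ) = t.1 := by
      funext i
      exact congrFun (Fin.cons_self_tail t.1) i
    rw [this]; exact t.2⟩
  invFun p := ⟨Fin.cons p.1.1 p.1.2, p.2⟩
  left_inv t := by
    apply Subtype.ext
    funext i
    exact congrFun (Fin.cons_self_tail t.1) i
  right_inv p := by
    apply Subtype.ext
    apply Prod.ext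
    · simp
    · funext i; simp

lemma card_valid : ∀ (n h : ℕ), Nat.card {t : Fin n → Stp // Valid h t} = A h n := by
  intro n
  induction n with
  | zero =>
    intro h
    match h with
    | 0 =>
      have hv : ∀ t : Fin 0 → Stp, Valid 0 t := by
        intro t
        refine ⟨fun v => v.elim0, fun v => v.elim0, ?_⟩
        simp [totO, totC]
      rw [Nat.card_congr (Equiv.subtypeUnivEquiv hv)]
      simp [A]
    | h+1 =>
      have hv : ∀ t : Fin 0 → Stp, ¬ Valid (h+1) t := by
        intro t ht
        have := ht.2.2
        simp [totO, totC] at this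
      haveI : IsEmpty {t : Fin 0 → Stp // Valid (h+1) t} :=
        ⟨fun x => hv x.1 x.2⟩
      rw [Nat.card_of_isEmpty]
      simp [A]
  | succ n ih =>
    intro h
    rw [Nat.card_congr (consSplit h),
      Nat.card_congr (Equiv.subtypeProdEquivSigmaSubtype
        (fun (s : Stp) (t : Fin n → Stp) => Valid h (Fin.cons s t))),
      Nat.card_eq_fintype_card, Fintype.card_sigma, Fin.sum_univ_four]
    have c0 : Fintype.card {t : Fin n → Stp // Valid h (Fin.cons 0 t)}
        = A (h+1) n := by
      rw [Fintype.card_congr (Equiv.subtypeEquivRight (fun t => valid_cons_U h t)),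
        ← Nat.card_eq_fintype_card]
      exact ih (h+1)
    have c3 : Fintype.card {t : Fin n → Stp // Valid h (Fin.cons 3 t)}
        = if h = 0 then A 0 n else 0 := by
      match h with
      | 0 =>
        have e : ∀ t : Fin n → Stp, Valid 0 (Fin.cons 3 t) ↔ Valid 0 t := by
          intro t; rw [valid_cons_F]; simp
        rw [Fintype.card_congr (Equiv.subtypeEquivRight e), ← Nat.card_eq_fintype_card]
        simpa using ih 0
      | h+1 =>
        haveI : IsEmpty {t : Fin n → Stp // Valid (h+1) (Fin.cons 3 t)} := by
          refine ⟨fun x => ?_⟩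
          have := (valid_cons_F (h+1) x.1).mp x.2
          omega
        simp [Fintype.card_eq_zero]
    match h with
    | 0 =>
      have c1 : Fintype.card {t : Fin n → Stp // Valid 0 (Fin.cons 1 t)} = 0 := by
        haveI : IsEmpty {t : Fin n → Stp // Valid 0 (Fin.cons 1 t)} := by
          refine ⟨fun x => ?_⟩
          have := (valid_cons_D 0 x.1).mp x.2
          omega
        simp [Fintype.card_eq_zero]
      have c2 : Fintype.card {t : Fin n → Stp // Valid 0 (Fin.cons 2 t)} = 0 := by
        haveI : IsEmpty {t : Fin n → Stp // Valid 0 (Fin.cons 2 t)} := by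
          refine ⟨fun x => ?_⟩
          have := (valid_cons_B 0 x.1).mp x.2
          omega
        simp [Fintype.card_eq_zero]
      rw [c0, c1, c2, c3]
      show A 1 n + 0 + 0 + A 0 n = A 0 (n+1)
      show A 1 n + 0 + 0 + A 0 n = A 1 n + A 0 n
      omega
    | h+1 =>
      have c1 : Fintype.card {t : Fin n → Stp // Valid (h+1) (Fin.cons 1 t)}
          = A h n := by
        have e : ∀ t : Fin n → Stp, Valid (h+1) (Fin.cons 1 t) ↔ Valid h t := by
          intro t; rw [valid_cons_D]; simp
        rw [Fintype.card_congr (Equiv.subtypeEquivRight e), ← Nat.card_eq_fintype_card]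
        exact ih h
      have c2 : Fintype.card {t : Fin n → Stp // Valid (h+1) (Fin.cons 2 t)}
          = A (h+1) n := by
        have e : ∀ t : Fin n → Stp, Valid (h+1) (Fin.cons 2 t) ↔ Valid (h+1) t := by
          intro t; rw [valid_cons_B]; simp
        rw [Fintype.card_congr (Equiv.subtypeEquivRight e), ← Nat.card_eq_fintype_card]
        exact ih (h+1)
      rw [c0, c1, c2, c3]
      show A (h+2) n + A h n + A (h+1) n + (if h+1 = 0 then A 0 n else 0)
        = A (h+2) n + A (h+1) n + A h n
      simp
      omega
section Diagrams

variable {n : ℕ}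

def oD (D : Finset (Fin n × Fin n)) (v : Fin n) : Prop := ∃ j, (v, j) ∈ D
def cD (D : Finset (Fin n × Fin n)) (v : Fin n) : Prop := ∃ i, (i, v) ∈ D

instance (D : Finset (Fin n × Fin n)) (v : Fin n) : Decidable (oD D v) :=
  inferInstanceAs (Decidable (∃ j, (v, j) ∈ D))
instance (D : Finset (Fin n × Fin n)) (v : Fin n) : Decidable (cD D v) :=
  inferInstanceAs (Decidable (∃ i, (i, v) ∈ D))

def tOf (D : Finset (Fin n × Fin n)) : Fin n → Stp := fun v =>
  if oD D v then (if cD D v then 2 else 0) else (if cD D v then 1 else 3)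

def DOf (t : Fin n → Stp) : Finset (Fin n × Fin n) :=
  Finset.univ.filter (fun p => isO (t p.1) ∧ isC (t p.2) ∧ cntO t p.1 = cntC t p.2)

lemma isO_tOf (D : Finset (Fin n × Fin n)) (v : Fin n) : isO (tOf D v) ↔ oD D v := by
  unfold tOf
  by_cases h1 : oD D v <;> by_cases h2 : cD D v <;> simp [h1, h2, isO]

lemma isC_tOf (D : Finset (Fin n × Fin n)) (v : Fin n) : isC (tOf D v) ↔ cD D v := by
  unfold tOf
  by_cases h1 : oD D v <;> by_cases h2 : cD D v <;> simp [h1, h2, isC]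

lemma tOf_eq_three (D : Finset (Fin n × Fin n)) (v : Fin n) :
    tOf D v = 3 ↔ ¬ oD D v ∧ ¬ cD D v := by
  unfold tOf
  by_cases h1 : oD D v <;> by_cases h2 : cD D v <;> simp [h1, h2]

/-- membership in DOf -/
lemma mem_DOf {t : Fin n → Stp} {p : Fin n × Fin n} :
    p ∈ DOf t ↔ isO (t p.1) ∧ isC (t p.2) ∧ cntO t p.1 = cntC t p.2 := by
  unfold DOf
  simp

/-- monotonicity and strict monotonicity of rank counts -/
lemma cntO_mono (t : Fin n → Stp) {v v' : Fin n} (h : v ≤ v') : cntO t v ≤ cntO t v' := by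
  apply Finset.card_le_card
  intro x hx
  simp only [Finset.mem_filter] at hx ⊢
  exact ⟨hx.1, lt_of_lt_of_le hx.2.1 h, hx.2.2⟩

lemma cntC_mono (t : Fin n → Stp) {v v' : Fin n} (h : v ≤ v') : cntC t v ≤ cntC t v' := by
  apply Finset.card_le_card
  intro x hx
  simp only [Finset.mem_filter] at hx ⊢
  exact ⟨hx.1, lt_of_lt_of_le hx.2.1 h, hx.2.2⟩

lemma cntO_strict (t : Fin n → Stp) {v v' : Fin n} (hv : isO (t v)) (h : v < v') :
    cntO t v < cntO t v' := by
  apply Finset.card_lt_card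
  constructor
  · intro x hx
    simp only [Finset.mem_filter] at hx ⊢
    exact ⟨hx.1, lt_trans hx.2.1 h, hx.2.2⟩
  · intro hsub
    have hv' : v ∈ Finset.univ.filter (fun x => x < v' ∧ isO (t x)) := by
      simp [h, hv]
    have := hsub hv'
    simp at this

lemma cntC_strict (t : Fin n → Stp) {v v' : Fin n} (hv : isC (t v)) (h : v < v') :
    cntC t v < cntC t v' := by
  apply Finset.card_lt_card
  constructor
  · intro x hx
    simp only [Finset.mem_filter] at hx ⊢
    exact ⟨hx.1, lt_trans hx.2.1 h, hx.2.2⟩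
  · intro hsub
    have hv' : v ∈ Finset.univ.filter (fun x => x < v' ∧ isC (t x)) := by
      simp [h, hv]
    have := hsub hv'
    simp at this

lemma rank_inj_O (t : Fin n → Stp) {v v' : Fin n} (hv : isO (t v)) (hv' : isO (t v'))
    (h : cntO t v = cntO t v') : v = v' := by
  rcases lt_trichotomy v v' with hlt | he | hgt
  · exact absurd h (Nat.ne_of_lt (cntO_strict t hv hlt))
  · exact he
  · exact absurd h.symm (Nat.ne_of_lt (cntO_strict t hv' hgt))

lemma rank_inj_C (t : Fin n → Stp) {v v' : Fin n} (hv : isC (t v)) (hv' : isC (t v'))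
    (h : cntC t v = cntC t v') : v = v' := by
  rcases lt_trichotomy v v' with hlt | he | hgt
  · exact absurd h (Nat.ne_of_lt (cntC_strict t hv hlt))
  · exact he
  · exact absurd h.symm (Nat.ne_of_lt (cntC_strict t hv' hgt))

lemma cntO_lt_totO (t : Fin n → Stp) {v : Fin n} (hv : isO (t v)) :
    cntO t v < totO t := by
  apply Finset.card_lt_card
  constructor
  · intro x hx
    simp only [Finset.mem_filter] at hx ⊢
    exact ⟨hx.1, hx.2.2⟩
  · intro hsub
    have hv' : v ∈ Finset.univ.filter (fun x => isO (t x)) := by simp [hv]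
    have := hsub hv'
    simp at this

lemma cntC_lt_totC (t : Fin n → Stp) {v : Fin n} (hv : isC (t v)) :
    cntC t v < totC t := by
  apply Finset.card_lt_card
  constructor
  · intro x hx
    simp only [Finset.mem_filter] at hx ⊢
    exact ⟨hx.1, hx.2.2⟩
  · intro hsub
    have hv' : v ∈ Finset.univ.filter (fun x => isC (t x)) := by simp [hv]
    have := hsub hv'
    simp at this

/-- a generic rank-surjectivity lemma -/
lemma exists_rank (S : Finset (Fin n)) (m : ℕ) (hm : m < S.card) :
    ∃ j ∈ S, (S.filter (fun x => x < j)).card = m := by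
  set f : {x // x ∈ S} → Fin S.card := fun x =>
    ⟨(S.filter (fun y => y < x.1)).card, by
      apply Finset.card_lt_card
      constructor
      · exact Finset.filter_subset _ _
      · intro hsub
        have := hsub x.2
        simp at this⟩ with hf
  have hinj : Function.Injective f := by
    intro x y hxy
    have hcard : (S.filter (fun z => z < x.1)).card = (S.filter (fun z => z < y.1)).card := by
      have := congrArg Fin.val hxy
      simpa [hf] using this
    have key : ∀ a b : {x // x ∈ S}, a.1 < b.1 →
        (S.filter (fun z => z < a.1)).card < (S.filter (fun z => z < b.1)).card := by
      intro a b hab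
      apply Finset.card_lt_card
      constructor
      · intro z hz
        simp only [Finset.mem_filter] at hz ⊢
        exact ⟨hz.1, lt_trans hz.2 hab⟩
      · intro hsub
        have : a.1 ∈ S.filter (fun z => z < b.1) := by
          simp [a.2, hab]
        have := hsub this
        simp at this
    apply Subtype.ext
    rcases lt_trichotomy x.1 y.1 with hlt | he | hgt
    · exact absurd hcard (Nat.ne_of_lt (key x y hlt))
    · exact he
    · exact absurd hcard.symm (Nat.ne_of_lt (key y x hgt))
  have hbij : Function.Bijective f := by
    rw [Fintype.bijective_iff_injective_and_card]
    exact ⟨hinj, by simp⟩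
  obtain ⟨x, hx⟩ := hbij.2 ⟨m, hm⟩
  refine ⟨x.1, x.2, ?_⟩
  have := congrArg Fin.val hx
  simpa [hf] using this

lemma cntO_as_rank (t : Fin n → Stp) (v : Fin n) :
    cntO t v = ((Finset.univ.filter (fun x => isO (t x))).filter (fun x => x < v)).card := by
  unfold cntO
  rw [Finset.filter_filter]
  congr 1
  apply Finset.filter_congr
  intro x _
  tauto

lemma cntC_as_rank (t : Fin n → Stp) (v : Fin n) :
    cntC t v = ((Finset.univ.filter (fun x => isC (t x))).filter (fun x => x < v)).card := by
  unfold cntC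
  rw [Finset.filter_filter]
  congr 1
  apply Finset.filter_congr
  intro x _
  tauto

/-- for valid words, every opener has a matching closer, and conversely -/
lemma exists_closer {t : Fin n → Stp} (hv : Valid 0 t) {v : Fin n} (ho : isO (t v)) :
    ∃ j, isC (t j) ∧ cntC t j = cntO t v := by
  have htot : totO t = totC t := by have := hv.2.2; omega
  have hm : cntO t v < (Finset.univ.filter (fun x => isC (t x))).card := by
    have h1 := cntO_lt_totO t ho
    unfold totO totC at *
    omega
  obtain ⟨j, hj, hjr⟩ := exists_rank _ _ hm
  simp only [Finset.mem_filter] at hj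
  refine ⟨j, hj.2, ?_⟩
  rw [cntC_as_rank, hjr]

lemma exists_opener {t : Fin n → Stp} (hv : Valid 0 t) {v : Fin n} (hc : isC (t v)) :
    ∃ i, isO (t i) ∧ cntO t i = cntC t v := by
  have htot : totO t = totC t := by have := hv.2.2; omega
  have hm : cntC t v < (Finset.univ.filter (fun x => isO (t x))).card := by
    have h1 := cntC_lt_totC t hc
    unfold totO totC at *
    omega
  obtain ⟨i, hi, hir⟩ := exists_rank _ _ hm
  simp only [Finset.mem_filter] at hi
  refine ⟨i, hi.2, ?_⟩
  rw [cntO_as_rank, hir]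

end Diagrams
section Main

variable {n : ℕ}

def Conds (D : Finset (Fin n × Fin n)) : Prop :=
  (∀ a ∈ D, a.1 < a.2) ∧
  (∀ i j j' : Fin n, (i, j) ∈ D → (i, j') ∈ D → j = j') ∧
  (∀ i i' j : Fin n, (i, j) ∈ D → (i', j) ∈ D → i = i') ∧
  (¬ ∃ i₁ j₁ i₂ j₂ : Fin n, (i₁, j₁) ∈ D ∧ (i₂, j₂) ∈ D ∧
    i₁ < i₂ ∧ j₂ < j₁) ∧
  (¬ ∃ i₁ j₁ c : Fin n, (i₁, j₁) ∈ D ∧ i₁ < c ∧ c < j₁ ∧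
    ∀ x : Fin n, (x, c) ∉ D ∧ (c, x) ∉ D)

variable {D : Finset (Fin n × Fin n)}

lemma cntO_tOf (hD : Conds D) (v : Fin n) :
    cntO (tOf D) v = (D.filter (fun p => p.1 < v)).card := by
  unfold cntO
  apply Eq.symm
  apply Finset.card_bij (fun p _ => p.1)
  · intro p hp
    simp only [Finset.mem_filter] at hp ⊢
    exact ⟨Finset.mem_univ _, hp.2, (isO_tOf D p.1).mpr ⟨p.2, hp.1⟩⟩
  · intro p hp q hq hpq
    simp only [Finset.mem_filter] at hp hq
    have := hD.2.1 p.1 p.2 q.2 (by exact hp.1) (by rw [hpq]; exact hq.1)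
    exact Prod.ext hpq this
  · intro x hx
    simp only [Finset.mem_filter] at hx
    obtain ⟨j, hj⟩ := (isO_tOf D x).mp hx.2.2
    exact ⟨(x, j), by simp [hj, hx.2.1], rfl⟩

lemma cntC_tOf (hD : Conds D) (v : Fin n) :
    cntC (tOf D) v = (D.filter (fun p => p.2 < v)).card := by
  unfold cntC
  apply Eq.symm
  apply Finset.card_bij (fun p _ => p.2)
  · intro p hp
    simp only [Finset.mem_filter] at hp ⊢
    exact ⟨Finset.mem_univ _, hp.2, (isC_tOf D p.2).mpr ⟨p.1, hp.1⟩⟩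
  · intro p hp q hq hpq
    simp only [Finset.mem_filter] at hp hq
    have := hD.2.2.1 p.1 q.1 p.2 (by exact hp.1) (by rw [hpq]; exact hq.1)
    exact Prod.ext this hpq
  · intro x hx
    simp only [Finset.mem_filter] at hx
    obtain ⟨i, hi⟩ := (isC_tOf D x).mp hx.2.2
    exact ⟨(i, x), by simp [hi, hx.2.1], rfl⟩

lemma totO_tOf (hD : Conds D) : totO (tOf D) = D.card := by
  unfold totO
  apply Eq.symm
  apply Finset.card_bij (fun p _ => p.1)
  · intro p hp
    simp only [Finset.mem_filter]
    exact ⟨Finset.mem_univ _, (isO_tOf D p.1).mpr ⟨p.2, hp⟩⟩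
  · intro p hp q hq hpq
    have := hD.2.1 p.1 p.2 q.2 (by exact hp) (by rw [hpq]; exact hq)
    exact Prod.ext hpq this
  · intro x hx
    simp only [Finset.mem_filter] at hx
    obtain ⟨j, hj⟩ := (isO_tOf D x).mp hx.2
    exact ⟨(x, j), hj, rfl⟩

lemma totC_tOf (hD : Conds D) : totC (tOf D) = D.card := by
  unfold totC
  apply Eq.symm
  apply Finset.card_bij (fun p _ => p.2)
  · intro p hp
    simp only [Finset.mem_filter]
    exact ⟨Finset.mem_univ _, (isC_tOf D p.2).mpr ⟨p.1, hp⟩⟩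
  · intro p hp q hq hpq
    have := hD.2.2.1 p.1 q.1 p.2 (by exact hp) (by rw [hpq]; exact hq)
    exact Prod.ext this hpq
  · intro x hx
    simp only [Finset.mem_filter] at hx
    obtain ⟨i, hi⟩ := (isC_tOf D x).mp hx.2
    exact ⟨(i, x), hi, rfl⟩

lemma arc_rank (hD : Conds D) {i j : Fin n} (hij : (i, j) ∈ D) :
    cntO (tOf D) i = cntC (tOf D) j := by
  rw [cntO_tOf hD, cntC_tOf hD]
  congr 1
  apply Finset.filter_congr
  intro p hp
  by_cases hpe : p = (i, j)
  · subst hpe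
    simp
  constructor
  · intro h1
    have hne : p.2 ≠ j := by
      intro he
      have := hD.2.2.1 p.1 i j (by rw [← he] at hij ⊢; exact (hp)) hij
      exact hpe (Prod.ext this he)
    rcases lt_trichotomy p.2 j with h | h | h
    · exact h
    · exact absurd h hne
    · exact absurd ⟨p.1, p.2, i, j, hp, hij, h1, h⟩ hD.2.2.2.1
  · intro h2
    have hne : p.1 ≠ i := by
      intro he
      have := hD.2.1 i p.2 j (by rw [← he] at hij ⊢; exact (hp)) hij
      exact hpe (Prod.ext he this)
    rcases lt_trichotomy p.1 i with h | h | h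
    · exact h
    · exact absurd h hne
    · exact absurd ⟨i, j, p.1, p.2, hij, hp, h, h2⟩ hD.2.2.2.1

lemma valid_tOf (hD : Conds D) : Valid 0 (tOf D) := by
  refine ⟨?_, ?_, ?_⟩
  · intro v hv
    obtain ⟨a, ha⟩ := (isC_tOf D v).mp hv
    rw [cntO_tOf hD, cntC_tOf hD]
    rw [Nat.zero_add]
    apply Finset.card_lt_card
    constructor
    · intro p hp
      simp only [Finset.mem_filter] at hp ⊢
      exact ⟨hp.1, lt_trans (hD.1 p hp.1) hp.2⟩
    · intro hsub
      have hmem : (a, v) ∈ D.filter (fun p => p.1 < v) := by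
        simp only [Finset.mem_filter]
        exact ⟨ha, hD.1 (a, v) ha⟩
      have := hsub hmem
      simp at this
  · intro v hv
    obtain ⟨hno, hnc⟩ := (tOf_eq_three D v).mp hv
    rw [cntO_tOf hD, cntC_tOf hD, Nat.zero_add]
    congr 1
    apply Finset.filter_congr
    intro p hp
    constructor
    · intro h1
      rcases lt_trichotomy p.2 v with h | h | h
      · exact h
      · exfalso
        apply hnc
        have hp' : (p.1, p.2) ∈ D := hp
        rw [h] at hp'
        exact ⟨p.1, hp'⟩
      · exact absurd ⟨p.1, p.2, v, hp, h1, h,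
          fun x => ⟨fun hc => hnc ⟨x, hc⟩, fun hc => hno ⟨x, hc⟩⟩⟩ hD.2.2.2.2
    · intro h2
      exact lt_trans (hD.1 p hp) h2
  · rw [totO_tOf hD, totC_tOf hD, Nat.zero_add]

lemma DOf_tOf (hD : Conds D) : DOf (tOf D) = D := by
  apply Finset.ext
  intro p
  rw [mem_DOf, isO_tOf, isC_tOf]
  constructor
  · rintro ⟨⟨b, hb⟩, ⟨a, ha⟩, hr⟩
    have h1 : cntO (tOf D) p.1 = cntC (tOf D) b := arc_rank hD (hb)
    have h2 : cntC (tOf D) b = cntC (tOf D) p.2 := by rw [← h1, hr]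
    have hcb : isC (tOf D b) := (isC_tOf D b).mpr ⟨p.1, hb⟩
    have hcp : isC (tOf D p.2) := (isC_tOf D p.2).mpr ⟨a, ha⟩
    have heq := rank_inj_C (tOf D) hcb hcp h2
    rw [heq] at hb
    exact hb
  · intro hp
    exact ⟨⟨p.2, Prod.mk.eta ▸ hp⟩, ⟨p.1, Prod.mk.eta ▸ hp⟩, arc_rank hD (hp)⟩

end Main
section Main2

variable {n : ℕ}

lemma mem_DOf' {t : Fin n → Stp} {i j : Fin n} :
    (i, j) ∈ DOf t ↔ isO (t i) ∧ isC (t j) ∧ cntO t i = cntC t j := mem_DOf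

lemma conds_DOf {t : Fin n → Stp} (hv : Valid 0 t) : Conds (DOf t) := by
  have harc : ∀ p ∈ DOf t, p.1 < p.2 := by
    intro p hp
    rw [mem_DOf] at hp
    obtain ⟨ho, hc, hr⟩ := hp
    by_contra hle
    push_neg at hle
    have h1 : cntC t p.2 < cntO t p.2 := by
      have := hv.1 p.2 hc
      omega
    have h2 : cntO t p.2 ≤ cntO t p.1 := cntO_mono t hle
    omega
  refine ⟨harc, ?_, ?_, ?_, ?_⟩
  · intro i j j' hj hj'
    rw [mem_DOf'] at hj hj'
    exact rank_inj_C t hj.2.1 hj'.2.1 (by have := hj.2.2; have := hj'.2.2; omega)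
  · intro i i' j hi hi'
    rw [mem_DOf'] at hi hi'
    exact rank_inj_O t hi.1 hi'.1 (by have := hi.2.2; have := hi'.2.2; omega)
  · rintro ⟨i₁, j₁, i₂, j₂, h1, h2, hii, hjj⟩
    rw [mem_DOf'] at h1 h2
    have a1 : cntO t i₁ < cntO t i₂ := cntO_strict t h1.1 hii
    have a2 : cntC t j₂ < cntC t j₁ := cntC_strict t h2.2.1 hjj
    have := h1.2.2
    have := h2.2.2
    omega
  · rintro ⟨i₁, j₁, c, h1, hic, hcj, hiso⟩
    rw [mem_DOf'] at h1
    have hno : ¬ isO (t c) := by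
      intro ho
      obtain ⟨j, hjc, hjr⟩ := exists_closer hv ho
      exact (hiso j).2 (mem_DOf'.mpr ⟨ho, hjc, hjr.symm⟩)
    have hnc : ¬ isC (t c) := by
      intro hc
      obtain ⟨i, hio, hir⟩ := exists_opener hv hc
      exact (hiso i).1 (mem_DOf'.mpr ⟨hio, hc, hir⟩)
    have h3 : t c = 3 := by
      have k3 : ∀ s : Stp, ¬ isO s → ¬ isC s → s = 3 := by decide
      exact k3 _ hno hnc
    have hF : cntO t c = cntC t c := by
      have := hv.2.1 c h3
      omega
    have b1 : cntO t i₁ < cntO t c := cntO_strict t h1.1 hic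
    have b2 : cntC t c ≤ cntC t j₁ := cntC_mono t (le_of_lt hcj)
    have := h1.2.2
    omega

lemma tOf_DOf {t : Fin n → Stp} (hv : Valid 0 t) : tOf (DOf t) = t := by
  funext v
  have ho : oD (DOf t) v ↔ isO (t v) := by
    constructor
    · rintro ⟨j, hj⟩
      exact (mem_DOf'.mp hj).1
    · intro ho
      obtain ⟨j, hjc, hjr⟩ := exists_closer hv ho
      exact ⟨j, mem_DOf'.mpr ⟨ho, hjc, hjr.symm⟩⟩
  have hc : cD (DOf t) v ↔ isC (t v) := by
    constructor
    · rintro ⟨i, hi⟩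
      exact (mem_DOf'.mp hi).2.1
    · intro hcv
      obtain ⟨i, hio, hir⟩ := exists_opener hv hcv
      exact ⟨i, mem_DOf'.mpr ⟨hio, hcv, hir⟩⟩
  have key : ∀ s : Stp, s = 0 ∨ s = 1 ∨ s = 2 ∨ s = 3 := by decide
  unfold tOf
  rcases key (t v) with h | h | h | h <;> rw [h] at ho hc ⊢
  · rw [if_pos (ho.mpr (by decide)), if_neg (fun hx => absurd (hc.mp hx) (by decide))]
  · rw [if_neg (fun hx => absurd (ho.mp hx) (by decide)), if_pos (hc.mpr (by decide))]
  · rw [if_pos (ho.mpr (by decide)), if_pos (hc.mpr (by decide))]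
  · rw [if_neg (fun hx => absurd (ho.mp hx) (by decide)),
      if_neg (fun hx => absurd (hc.mp hx) (by decide))]

def diagEquiv (n : ℕ) :
    {D : Finset (Fin n × Fin n) // Conds D} ≃ {t : Fin n → Stp // Valid 0 t} where
  toFun D := ⟨tOf D.1, valid_tOf D.2⟩
  invFun t := ⟨DOf t.1, conds_DOf t.2⟩
  left_inv D := Subtype.ext (DOf_tOf D.2)
  right_inv t := Subtype.ext (tOf_DOf t.2)

end Main2

/-- Set partitions of `{1,…,n}`, given via their arc diagrams (a set `D` of arcs
`(i,j)` with `i < j`, each vertex being the left endpoint of at most one arc and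
the right endpoint of at most one arc), with no enhanced 2-nesting — no pair of
arcs `(i₁,j₁)`, `(i₂,j₂)` with `i₁ < i₂ ≤ j₂ < j₁`, and no fixed point strictly
under an arc — are counted by the Motzkin numbers. -/
theorem partitions_no_enhanced_two_nesting_motzkin
    (M : ℕ → ℕ) (hM0 : M 0 = 1)
    (hMrec : ∀ n, M (n+1) = M n + ∑ k ∈ Finset.range n, M k * M (n-1-k))
    (n : ℕ) :
    Nat.card {D : Finset (Fin n × Fin n) //
      (∀ a ∈ D, a.1 < a.2) ∧
      (∀ i j j' : Fin n, (i, j) ∈ D → (i, j') ∈ D → j = j') ∧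
      (∀ i i' j : Fin n, (i, j) ∈ D → (i', j) ∈ D → i = i') ∧
      (¬ ∃ i₁ j₁ i₂ j₂ : Fin n, (i₁, j₁) ∈ D ∧ (i₂, j₂) ∈ D ∧
        i₁ < i₂ ∧ j₂ < j₁) ∧
      (¬ ∃ i₁ j₁ c : Fin n, (i₁, j₁) ∈ D ∧ i₁ < c ∧ c < j₁ ∧
        ∀ x : Fin n, (x, c) ∉ D ∧ (c, x) ∉ D)} = M n := by
  have e1 : Nat.card {D : Finset (Fin n × Fin n) // Conds D} = M n := by
    rw [Nat.card_congr (diagEquiv n), card_valid n 0, A_eq_M M hM0 hMrec]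
  exact e1
end

section
/- For exponential generating functions: the generating function counting standard Young tableaux of height at most 2 is \tilde{Y}_2(t) = b_0(t) + b_1(t), where b_j(t) = \sum_{n ≥ 0} t^{2n+j} / (n!(n+j)!) is the modified Bessel function coefficient series; i.e., the number of SYT of size n with at most 2 rows is n! · [t^n](b_0(t) + b_1(t)). -/
/-- The coefficient series of the modified Bessel function:
`b_j(t) = ∑_{n ≥ 0} t^{2n+j} / (n!(n+j)!)`. -/
noncomputable def besselSeries (j : ℕ) : PowerSeries ℚ :=
  PowerSeries.mk fun N =>
    if j ≤ N ∧ (N - j) % 2 = 0 then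
      1 / ((Nat.factorial ((N - j) / 2) : ℚ) * (Nat.factorial ((N - j) / 2 + j) : ℚ))
    else 0

open Finset

namespace SytTwoRows

/-- prefix count of letter `v` up to position `j` -/
def cnt {n : ℕ} (f : Fin n → Fin 2) (v : Fin 2) (j : Fin n) : ℕ :=
  (univ.filter fun i => i ≤ j ∧ f i = v).card

/-- total count of letter `v` -/
def tot {n : ℕ} (f : Fin n → Fin 2) (v : Fin 2) : ℕ :=
  (univ.filter fun i => f i = v).card

/-- ballot condition -/
def Bal {n : ℕ} (f : Fin n → Fin 2) : Prop :=
  ∀ j : Fin n, cnt f 1 j ≤ cnt f 0 j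

/-- refined count: ballot words of length `n` with `k` more zeros than ones -/
noncomputable def S (n k : ℕ) : ℕ :=
  Nat.card {f : Fin n → Fin 2 // Bal f ∧ tot f 0 = tot f 1 + k}

lemma cnt_snoc_castSucc {n : ℕ} (g : Fin n → Fin 2) (x v : Fin 2) (j : Fin n) :
    cnt (Fin.snoc g x) v j.castSucc = cnt g v j := by
  unfold cnt
  rw [Fin.univ_castSuccEmb, Finset.filter_cons, if_neg, Finset.filter_map, Finset.card_map]
  · congr 1
    ext i
    rw [Finset.mem_filter]
    simp [Fin.coe_castSuccEmb, Fin.castSucc_le_castSucc_iff, Fin.snoc_castSucc]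
  · rintro ⟨h, -⟩
    exact absurd h (not_le.mpr (Fin.castSucc_lt_last j))

lemma cnt_last_eq_tot {n : ℕ} (f : Fin (n+1) → Fin 2) (v : Fin 2) :
    cnt f v (Fin.last n) = tot f v := by
  unfold cnt tot
  congr 1
  ext i
  simp [Fin.le_last]

lemma tot_snoc {n : ℕ} (g : Fin n → Fin 2) (x v : Fin 2) :
    tot (Fin.snoc g x) v = tot g v + if x = v then 1 else 0 := by
  unfold tot
  have key : ((univ.map Fin.castSuccEmb).filter
      fun i => (Fin.snoc g x : Fin (n+1) → Fin 2) i = v).card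
      = (univ.filter fun i => g i = v).card := by
    rw [Finset.filter_map, Finset.card_map]
    congr 1
    ext i
    rw [Finset.mem_filter]
    simp [Fin.coe_castSuccEmb, Fin.snoc_castSucc]
  rw [Fin.univ_castSuccEmb, Finset.filter_cons]
  simp only [Fin.snoc_last]
  split_ifs with h
  · rw [Finset.card_cons, key]
  · rw [key]; simp

lemma bal_tot {n : ℕ} (f : Fin n → Fin 2) (h : Bal f) : tot f 1 ≤ tot f 0 := by
  cases n with
  | zero => simp [tot]
  | succ n =>
    have := h (Fin.last n)
    rwa [cnt_last_eq_tot, cnt_last_eq_tot] at this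

lemma bal_snoc {n : ℕ} (g : Fin n → Fin 2) (x : Fin 2) :
    Bal (Fin.snoc g x) ↔
      Bal g ∧ tot g 1 + (if x = 1 then 1 else 0) ≤ tot g 0 + (if x = 0 then 1 else 0) := by
  constructor
  · intro h
    refine ⟨fun j => ?_, ?_⟩
    · have := h j.castSucc
      rwa [cnt_snoc_castSucc, cnt_snoc_castSucc] at this
    · have := h (Fin.last n)
      rwa [cnt_last_eq_tot, cnt_last_eq_tot, tot_snoc, tot_snoc] at this
  · rintro ⟨hb, hl⟩ j
    refine Fin.lastCases ?_ ?_ j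
    · rw [cnt_last_eq_tot, cnt_last_eq_tot, tot_snoc, tot_snoc]
      exact hl
    · intro i
      rw [cnt_snoc_castSucc, cnt_snoc_castSucc]
      exact hb i

lemma S_zero_zero : S 0 0 = 1 := by
  have h1 : ∀ f : Fin 0 → Fin 2, Bal f ∧ tot f 0 = tot f 1 + 0 :=
    fun f => ⟨fun j => j.elim0, by simp [tot]⟩
  rw [S, Nat.card_congr (Equiv.subtypeUnivEquiv h1), Nat.card_eq_fintype_card]
  simp

lemma S_zero_succ (k : ℕ) : S 0 (k+1) = 0 := by
  have : IsEmpty {f : Fin 0 → Fin 2 // Bal f ∧ tot f 0 = tot f 1 + (k+1)} :=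
    ⟨fun ⟨f, _, h⟩ => by simp [tot] at h⟩
  rw [S]; exact Nat.card_of_isEmpty

lemma S_succ (n K : ℕ) : S (n+1) K =
    Nat.card {g : Fin n → Fin 2 // Bal g ∧ tot g 0 + 1 = tot g 1 + K} + S n (K+1) := by
  classical
  rw [S]
  set P : (Fin (n+1) → Fin 2) → Prop := fun f => Bal f ∧ tot f 0 = tot f 1 + K with hP
  have e1 : {f : Fin (n+1) → Fin 2 // P f}
      ≃ {p : Fin 2 × (Fin n → Fin 2) // P (Fin.snocEquiv (fun _ => Fin 2) p)} :=
    (Equiv.subtypeEquiv (Fin.snocEquiv (fun _ => Fin 2)) (fun p => Iff.rfl)).symm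
  have e2 : {p : Fin 2 × (Fin n → Fin 2) // P (Fin.snocEquiv (fun _ => Fin 2) p)}
      ≃ Σ x : Fin 2, {g : Fin n → Fin 2 // P (Fin.snoc g x)} :=
    Equiv.subtypeProdEquivSigmaSubtype (fun x g => P (Fin.snoc g x))
  rw [Nat.card_congr (e1.trans e2), Nat.card_eq_fintype_card, Fintype.card_sigma,
    Fin.sum_univ_two]
  congr 1
  · rw [← Nat.card_eq_fintype_card]
    apply Nat.card_congr
    apply Equiv.subtypeEquivRight
    intro g
    rw [hP]
    simp only [bal_snoc, tot_snoc]
    norm_num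
    exact fun _ hb => (bal_tot g hb).trans (Nat.le_succ _)
  · rw [S, ← Nat.card_eq_fintype_card]
    apply Nat.card_congr
    apply Equiv.subtypeEquivRight
    intro g
    rw [hP]
    simp only [bal_snoc, tot_snoc]
    norm_num
    constructor
    · rintro ⟨⟨hb, h1⟩, ht⟩; exact ⟨hb, by omega⟩
    · rintro ⟨hb, ht⟩; exact ⟨⟨hb, by omega⟩, by omega⟩

lemma S_succ_zero (n : ℕ) : S (n+1) 0 = S n 1 := by
  rw [S_succ]
  have : IsEmpty {g : Fin n → Fin 2 // Bal g ∧ tot g 0 + 1 = tot g 1 + 0} :=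
    ⟨fun ⟨g, hb, h⟩ => by have := bal_tot g hb; omega⟩
  rw [Nat.card_of_isEmpty]; simp

lemma S_succ_succ (n k : ℕ) : S (n+1) (k+1) = S n k + S n (k+2) := by
  rw [S_succ]
  congr 1
  rw [S]
  apply Nat.card_congr
  apply Equiv.subtypeEquivRight
  intro g
  constructor
  · rintro ⟨hb, h⟩; exact ⟨hb, by omega⟩
  · rintro ⟨hb, h⟩; exact ⟨hb, by omega⟩

/-- `A n k = C(n, (n-k)/2)` when `k ≤ n` with `n-k` even, else 0. -/
def A (n k : ℕ) : ℤ :=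
  if k ≤ n ∧ (n - k) % 2 = 0 then (n.choose ((n - k) / 2) : ℤ) else 0

lemma A_pos {n k m : ℕ} (h : n = k + 2*m) : A n k = n.choose m := by
  unfold A
  rw [if_pos (by omega)]
  have : (n - k) / 2 = m := by omega
  rw [this]

lemma A_neg {n k : ℕ} (h : ∀ m, n ≠ k + 2*m) : A n k = 0 := by
  unfold A
  rw [if_neg]
  rintro ⟨h1, h2⟩
  exact h ((n - k) / 2) (by omega)

lemma A_pascal (n k : ℕ) (hk : 1 ≤ k) : A (n+1) k = A n (k-1) + A n (k+1) := by
  by_cases h : ∃ m, n + 1 = k + 2*m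
  · obtain ⟨m, hm⟩ := h
    by_cases hk1 : k = n + 1
    · have hm0 : m = 0 := by omega
      subst hk1 hm0
      rw [A_pos (show n + 1 = (n+1) + 2*0 by omega),
        A_pos (show n = (n+1) - 1 + 2*0 by omega),
        A_neg (fun m' => by omega)]
      simp
    · have hm1 : 1 ≤ m := by omega
      rw [A_pos hm, A_pos (show n = (k-1) + 2*m by omega),
        A_pos (show n = (k+1) + 2*(m-1) by omega)]
      have hmm : m = (m - 1) + 1 := by omega
      rw [hmm, Nat.choose_succ_succ, Nat.succ_eq_add_one]
      push_cast
      ring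
  · rw [A_neg (fun m' hc => h ⟨m', hc⟩), A_neg (fun m' hc => h ⟨m', by omega⟩),
      A_neg (fun m' hc => h ⟨m'+1, by omega⟩)]
    ring

lemma A_zero (n : ℕ) : A (n+1) 0 = 2 * A n 1 := by
  by_cases h : ∃ m, n + 1 = 2*m
  · obtain ⟨m, hm⟩ := h
    have hm1 : 1 ≤ m := by omega
    rw [A_pos (show n + 1 = 0 + 2*m by omega), A_pos (show n = 1 + 2*(m-1) by omega)]
    have hmm : m = (m - 1) + 1 := by omega
    have hsym : n.choose ((m-1)+1) = n.choose (m-1) := by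
      have : n = 2*(m-1) + 1 := by omega
      rw [this]
      exact Nat.choose_symm_half (m-1)
    rw [hmm, Nat.choose_succ_succ, hsym]
    push_cast
    ring
  · rw [A_neg (fun m' hc => h ⟨m', by omega⟩), A_neg (fun m' hc => h ⟨m'+1, by omega⟩)]
    ring

lemma S_eq (n : ℕ) : ∀ k, (S n k : ℤ) = A n k - A n (k+2) := by
  induction n with
  | zero =>
    intro k
    match k with
    | 0 =>
      rw [S_zero_zero, A_pos (show 0 = 0 + 2*0 by omega), A_neg (fun m => by omega)]
      simp
    | (k+1) =>
      rw [S_zero_succ, A_neg (fun m => by omega), A_neg (fun m => by omega)]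
      simp
  | succ n ih =>
    intro k
    match k with
    | 0 =>
      rw [S_succ_zero]
      push_cast
      rw [ih 1, A_zero, A_pascal n 2 (by omega)]
      norm_num
      ring
    | (k+1) =>
      rw [S_succ_succ]
      push_cast
      rw [ih k, ih (k+2), A_pascal n (k+1) (by omega), A_pascal n (k+3) (by omega)]
      norm_num
      ring

lemma tot_le {n : ℕ} (f : Fin n → Fin 2) (v : Fin 2) : tot f v ≤ n := by
  refine (Finset.card_filter_le _ _).trans ?_
  simp

lemma total_card (n : ℕ) :
    Nat.card {f : Fin n → Fin 2 // Bal f} = ∑ k ∈ range (n+1), S n k := by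
  classical
  rw [Nat.card_eq_fintype_card, Fintype.card_subtype]
  rw [Finset.card_eq_sum_card_fiberwise
    (f := fun f : Fin n → Fin 2 => tot f 0 - tot f 1) (t := range (n+1))
    (fun f _ => by have := tot_le f 0; simp only [Finset.mem_coe, mem_range]; omega)]
  refine Finset.sum_congr rfl fun k hk => ?_
  rw [S, Nat.card_eq_fintype_card, Fintype.card_subtype, Finset.filter_filter]
  congr 1
  ext f
  simp only [mem_filter, mem_univ, true_and]
  constructor
  · rintro ⟨hb, h⟩; have := bal_tot f hb; exact ⟨hb, by omega⟩
  · rintro ⟨hb, h⟩; exact ⟨hb, by omega⟩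

lemma telescope (a : ℕ → ℤ) (N : ℕ) :
    ∑ k ∈ range N, (a k - a (k+2)) = a 0 + a 1 - a N - a (N+1) := by
  induction N with
  | zero => simp
  | succ N ih => rw [Finset.sum_range_succ, ih]; ring

lemma sum_S (n : ℕ) : ((∑ k ∈ range (n+1), S n k : ℕ) : ℤ) = (n.choose (n/2) : ℤ) := by
  push_cast
  rw [Finset.sum_congr rfl (fun k _ => S_eq n k), telescope]
  rw [A_neg (k := n+1) (fun m => by omega), A_neg (k := n+2) (fun m => by omega)]
  rcases Nat.even_or_odd n with ⟨m, hm⟩ | ⟨m, hm⟩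
  · rw [A_pos (show n = 0 + 2*(n/2) by omega), A_neg (k := 1) (fun m' => by omega)]
    ring
  · rw [A_neg (k := 0) (fun m' => by omega), A_pos (show n = 1 + 2*(n/2) by omega)]
    ring

lemma card_bal (n : ℕ) :
    (Nat.card {f : Fin n → Fin 2 // Bal f} : ℤ) = (n.choose (n / 2) : ℤ) := by
  rw [total_card]
  exact sum_S n

end SytTwoRows

/-- The exponential generating function for standard Young tableaux of height
at most 2 is `b₀(t) + b₁(t)`: the number of SYT of size `n` with at most 2 rows
(encoded as lattice words) equals `n! · [tⁿ](b₀ + b₁)`. -/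
theorem syt_two_rows_egf (n : ℕ) :
    (Nat.card {f : Fin n → Fin 2 // ∀ j : Fin n,
        (Finset.univ.filter (fun i => i ≤ j ∧ f i = 1)).card ≤
          (Finset.univ.filter (fun i => i ≤ j ∧ f i = (0 : Fin 2))).card} : ℚ)
      = (n.factorial : ℚ) *
          PowerSeries.coeff (R := ℚ) n (besselSeries 0 + besselSeries 1) := by
  have hcard : (Nat.card {f : Fin n → Fin 2 // ∀ j : Fin n,
        (Finset.univ.filter (fun i => i ≤ j ∧ f i = 1)).card ≤
          (Finset.univ.filter (fun i => i ≤ j ∧ f i = (0 : Fin 2))).card} : ℤ)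
      = (n.choose (n / 2) : ℤ) := SytTwoRows.card_bal n
  have hcardQ : (Nat.card {f : Fin n → Fin 2 // ∀ j : Fin n,
        (Finset.univ.filter (fun i => i ≤ j ∧ f i = 1)).card ≤
          (Finset.univ.filter (fun i => i ≤ j ∧ f i = (0 : Fin 2))).card} : ℚ)
      = (n.choose (n / 2) : ℚ) := by exact_mod_cast congrArg (Int.cast : ℤ → ℚ) hcard
  rw [hcardQ, map_add]
  clear hcard hcardQ
  rw [besselSeries, besselSeries, PowerSeries.coeff_mk, PowerSeries.coeff_mk]
  rcases Nat.even_or_odd n with ⟨m, hm⟩ | ⟨m, hm⟩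
  · rw [if_pos (show 0 ≤ n ∧ (n - 0) % 2 = 0 by omega),
      if_neg (show ¬(1 ≤ n ∧ (n - 1) % 2 = 0) by omega)]
    have h2 : n - n / 2 = n / 2 := by omega
    have key := Nat.choose_mul_factorial_mul_factorial (Nat.div_le_self n 2)
    rw [h2] at key
    have keyQ : ((n.choose (n/2) : ℚ)) * (n/2).factorial * (n/2).factorial
        = (n.factorial : ℚ) := by exact_mod_cast congrArg (Nat.cast : ℕ → ℚ) key
    have hn0 : ((n - 0) / 2) = n / 2 := by omega
    rw [hn0]
    have hfac : ((n/2).factorial : ℚ) ≠ 0 := Nat.cast_ne_zero.mpr (Nat.factorial_ne_zero _)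
    field_simp
    simp only [Nat.add_zero, add_zero, mul_zero, mul_one]
    linarith [keyQ]
  · rw [if_neg (show ¬(0 ≤ n ∧ (n - 0) % 2 = 0) by omega),
      if_pos (show 1 ≤ n ∧ (n - 1) % 2 = 0 by omega)]
    have ha : (n - 1) / 2 = n / 2 := by omega
    have h2 : n - n / 2 = n / 2 + 1 := by omega
    have key := Nat.choose_mul_factorial_mul_factorial (Nat.div_le_self n 2)
    rw [h2] at key
    have keyQ : ((n.choose (n/2) : ℚ)) * (n/2).factorial * (n/2 + 1).factorial
        = (n.factorial : ℚ) := by exact_mod_cast congrArg (Nat.cast : ℕ → ℚ) key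
    rw [ha]
    have hfac : ((n/2).factorial : ℚ) ≠ 0 := Nat.cast_ne_zero.mpr (Nat.factorial_ne_zero _)
    have hfac2 : ((n/2 + 1).factorial : ℚ) ≠ 0 := Nat.cast_ne_zero.mpr (Nat.factorial_ne_zero _)
    field_simp
    linarith [keyQ]
end

section
/- For the finite group G of rational transformations of ℝ^{d−1} generated by φ_1: (z_1,…,z_{d−1}) ↦ (z_2/z_1, z_2, …, z_{d−1}), φ_k (for 1 < k < d−1): replacing z_k by z_{k−1}z_{k+1}/z_k, and φ_{d−1}: replacing z_{d−1} by z_{d−2}/z_{d−1}, the group G is isomorphic to the symmetric group S_d. -/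
/-- The rational transformation `φ_i` of `(ℝ∖{0})^{d−1}` (0-indexed:
`φ_i` replaces `z_i` by `z_{i−1}·z_{i+1}/z_i`, where the missing neighbour at
either boundary is replaced by 1). -/
def phiGen (d : ℕ) (i : Fin (d-1)) : Function.End (Fin (d-1) → ℝˣ) :=
  fun z => Function.update z i
    (((if _ : 0 < (i : ℕ) then z ⟨(i : ℕ) - 1, by have := i.isLt; omega⟩ else 1) *
      (if h : (i : ℕ) + 1 < d - 1 then z ⟨(i : ℕ) + 1, h⟩ else 1)) / z i)

namespace PhiAux

variable (d : ℕ)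

/-- Extension of `z` shifted by one: `F 0 = 1`, `F (k+1) = z_k` (or 1 out of range). -/
def F (z : Fin (d-1) → ℝˣ) : ℕ → ℝˣ
  | 0 => 1
  | k+1 => if h : k < d-1 then z ⟨k, h⟩ else 1

/-- Ratio coordinates. -/
def toW (z : Fin (d-1) → ℝˣ) : Fin d → ℝˣ := fun j => F d z (j.val+1) / F d z j.val

/-- Extension of `w : Fin d → ℝˣ` to `ℕ` by 1. -/
def Wext (w : Fin d → ℝˣ) (k : ℕ) : ℝˣ := if h : k < d then w ⟨k, h⟩ else 1

/-- Partial products recover `z`. -/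
def toZ (w : Fin d → ℝˣ) : Fin (d-1) → ℝˣ :=
  fun i => ∏ j ∈ Finset.range (i.val+1), Wext d w j

lemma prod_Wext_toW (z : Fin (d-1) → ℝˣ) {m : ℕ} (hm : m ≤ d) :
    ∏ j ∈ Finset.range m, Wext d (toW d z) j = F d z m := by
  have : ∀ j ∈ Finset.range m, Wext d (toW d z) j = F d z (j+1) / F d z j := by
    intro j hj
    have hjd : j < d := lt_of_lt_of_le (Finset.mem_range.mp hj) hm
    simp [Wext, toW, hjd]
  rw [Finset.prod_congr rfl this, Finset.prod_range_div (F d z)]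
  simp [F]

lemma toZ_toW (z : Fin (d-1) → ℝˣ) : toZ d (toW d z) = z := by
  funext i
  have : (i.val + 1) ≤ d := by have := i.isLt; omega
  rw [toZ, prod_Wext_toW d z this]
  simp [F, i.isLt]

lemma F_last (z : Fin (d-1) → ℝˣ) (hd : 1 ≤ d) : F d z d = 1 := by
  obtain ⟨k, rfl⟩ : ∃ k, d = k + 1 := ⟨d - 1, by omega⟩
  simp [F]

lemma prod_toW (z : Fin (d-1) → ℝˣ) : ∏ j, toW d z j = 1 := by
  rcases Nat.eq_zero_or_pos d with h | h
  · subst h; simp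
  simp only [toW]
  rw [Fin.prod_univ_eq_prod_range (fun k => F d z (k+1) / F d z k) d,
    Finset.prod_range_div (F d z), F_last d z h]
  simp [F]

lemma prod_Wext (w : Fin d → ℝˣ) : ∏ j ∈ Finset.range d, Wext d w j = ∏ j, w j := by
  rw [← Fin.prod_univ_eq_prod_range (fun k => Wext d w k) d]
  exact Finset.prod_congr rfl fun j _ => by simp [Wext, j.isLt]

lemma F_toZ (w : Fin d → ℝˣ) {k : ℕ} (hk : k ≤ d - 1) :
    F d (toZ d w) k = ∏ j ∈ Finset.range k, Wext d w j := by
  match k with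
  | 0 => simp [F]
  | k+1 =>
    have h : k < d - 1 := by omega
    simp [F, h, toZ]

lemma toW_toZ (w : Fin d → ℝˣ) (hw : ∏ j, w j = 1) : toW d (toZ d w) = w := by
  funext j
  have hj := j.isLt
  rw [toW]
  rcases lt_or_ge j.val (d-1) with h | h
  · rw [F_toZ d w (by omega : j.val + 1 ≤ d - 1), F_toZ d w (by omega : j.val ≤ d - 1),
      Finset.prod_range_succ, mul_div_cancel_left]
    simp [Wext, hj]
  · -- j.val = d - 1
    have hjd : j.val = d - 1 := by omega
    have hd1 : 1 ≤ d := by omega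
    have h1 : F d (toZ d w) (j.val + 1) = 1 := by
      rw [(by omega : j.val + 1 = d), F_last d _ hd1]
    have h2 : ∏ j ∈ Finset.range d, Wext d w j = 1 := by rw [prod_Wext d w, hw]
    have h3 : Wext d w j.val = w j := by simp [Wext, hj]
    have hP : (∏ j ∈ Finset.range (d-1), Wext d w j) = (Wext d w (d-1))⁻¹ := by
      have : (∏ j ∈ Finset.range (d-1), Wext d w j) * Wext d w (d-1) = 1 := by
        rw [← Finset.prod_range_succ, (by omega : d - 1 + 1 = d), h2]
      exact eq_inv_of_mul_eq_one_left this
    rw [h1, F_toZ d w (le_of_eq hjd), hjd, hP, ← h3, hjd]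
    simp

/-- The action of a permutation of `Fin d` on `z`-coordinates, via `w`-coordinates. -/
def act (σ : Equiv.Perm (Fin d)) : Function.End (Fin (d-1) → ℝˣ) :=
  fun z => toZ d (fun j => toW d z (σ⁻¹ j))

lemma prod_toW_comp (z : Fin (d-1) → ℝˣ) (e : Fin d ≃ Fin d) :
    ∏ j, toW d z (e j) = 1 := by
  rw [Equiv.prod_comp e (toW d z), prod_toW]

/-- `act` as a monoid homomorphism. -/
def actHom : Equiv.Perm (Fin d) →* Function.End (Fin (d-1) → ℝˣ) where
  toFun := act d
  map_one' := by
    funext z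
    show toZ d (fun j => toW d z ((1:Equiv.Perm (Fin d))⁻¹ j)) = z
    simpa using toZ_toW d z
  map_mul' σ τ := by
    funext z
    show act d (σ * τ) z = act d σ (act d τ z)
    simp only [act]
    rw [toW_toZ d _ (prod_toW_comp d z (τ⁻¹ : Equiv.Perm (Fin d)))]
    simp [mul_inv_rev, Equiv.Perm.mul_apply]

/-- The natural-number swap of `i` and `i+1`. -/
def ns (i : ℕ) (n : ℕ) : ℕ := if n = i then i+1 else if n = i+1 then i else n

lemma Wext_swap (z : Fin (d-1) → ℝˣ) (i : Fin (d-1)) {p1 : i.val < d}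
    {p2 : i.val + 1 < d} (n : ℕ) :
    Wext d (fun j => toW d z
        (Equiv.swap (⟨i.val, p1⟩ : Fin d) ⟨i.val+1, p2⟩ j)) n
      = Wext d (toW d z) (ns i.val n) := by
  have hi := i.isLt
  set a : Fin d := ⟨i.val, p1⟩ with ha
  set b : Fin d := ⟨i.val+1, p2⟩ with hb
  by_cases h1 : n = i.val
  · have hn : n < d := by omega
    have hns : ns i.val n = i.val + 1 := by simp [ns, h1]
    rw [hns]
    simp only [Wext, dif_pos hn, dif_pos (by omega : (i:ℕ) + 1 < d)]
    have e : (⟨n, hn⟩ : Fin d) = a := by simp [ha, Fin.ext_iff, h1]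
    rw [e, Equiv.swap_apply_left]
  · by_cases h2 : n = i.val + 1
    · have hn : n < d := by omega
      have hns : ns i.val n = i.val := by simp [ns, h1, h2]
      rw [hns]
      simp only [Wext, dif_pos hn, dif_pos (by omega : (i:ℕ) < d)]
      have e : (⟨n, hn⟩ : Fin d) = b := by simp [hb, Fin.ext_iff, h2]
      rw [e, Equiv.swap_apply_right]
    · have hns : ns i.val n = n := by simp [ns, h1, h2]
      rw [hns]
      by_cases hn : n < d
      · simp only [Wext, dif_pos hn]
        rw [Equiv.swap_apply_of_ne_of_ne]
        · exact fun h => h1 (by simpa [ha, Fin.ext_iff] using h)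
        · exact fun h => h2 (by simpa [hb, Fin.ext_iff] using h)
      · simp [Wext, hn]

lemma act_swap (i : Fin (d-1)) {p1 : i.val < d} {p2 : i.val + 1 < d} :
    act d (Equiv.swap (⟨i.val, p1⟩ : Fin d) ⟨i.val+1, p2⟩) = phiGen d i := by
  have hi := i.isLt
  funext z k
  set a : Fin d := ⟨i.val, p1⟩
  set b : Fin d := ⟨i.val+1, p2⟩
  have hinv : (Equiv.swap a b)⁻¹ = Equiv.swap a b := Equiv.swap_inv a b
  show toZ d (fun j => toW d z ((Equiv.swap a b)⁻¹ j)) k = phiGen d i z k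
  rw [hinv]
  have hW := fun n => Wext_swap d z i (p1 := p1) (p2 := p2) n
  rcases lt_trichotomy k.val i.val with h | h | h
  · -- k < i : untouched
    have hk : k ≠ i := fun e => by simp [e] at h
    rw [phiGen, Function.update_of_ne hk]
    have hc : ∀ j ∈ Finset.range (k.val+1),
        Wext d (fun j => toW d z (Equiv.swap a b j)) j = Wext d (toW d z) j := by
      intro j hj
      have hj' := Finset.mem_range.mp hj
      rw [hW j, show ns i.val j = j by unfold ns; split_ifs <;> omega]
    rw [toZ, Finset.prod_congr rfl hc]
    exact congrFun (toZ_toW d z) k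
  · -- k = i
    obtain rfl : k = i := Fin.ext h
    rw [phiGen, Function.update_self]
    rw [toZ, Finset.prod_range_succ]
    have h1 : ∀ j ∈ Finset.range k.val,
        Wext d (fun j => toW d z (Equiv.swap a b j)) j = Wext d (toW d z) j := by
      intro j hj
      have hj' := Finset.mem_range.mp hj
      rw [hW j, show ns k.val j = j by unfold ns; split_ifs <;> omega]
    rw [Finset.prod_congr rfl h1, prod_Wext_toW d z (by omega : k.val ≤ d),
      hW k.val, show ns k.val k.val = k.val + 1 by unfold ns; split_ifs <;> omega]
    have h2 : Wext d (toW d z) (k.val+1) = F d z (k.val+2) / F d z (k.val+1) := by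
      simp [Wext, toW, show k.val + 1 < d by omega]
    have h3 : F d z (k.val+1) = z k := by simp [F, hi]
    have h4 : F d z (k.val+2) =
        if h : (k : ℕ) + 1 < d - 1 then z ⟨(k : ℕ) + 1, h⟩ else 1 := by
      simp [F]
    have h5 : F d z k.val =
        if _ : 0 < (k : ℕ) then z ⟨(k : ℕ) - 1, by omega⟩ else 1 := by
      by_cases hk0 : 0 < (k : ℕ)
      · rw [dif_pos hk0]
        obtain ⟨m, hm⟩ : ∃ m, (k : ℕ) = m + 1 := ⟨(k : ℕ) - 1, by omega⟩
        have e1 : F d z (k : ℕ) = F d z (m+1) := by rw [hm]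
        rw [e1]
        have e2 : F d z (m+1) = z ⟨m, by omega⟩ := by
          simp [F, show m < d - 1 by omega]
        rw [e2]
        exact congrArg z (Fin.ext (show m = (k:ℕ) - 1 by omega))
      · rw [dif_neg hk0]
        have : (k : ℕ) = 0 := by omega
        rw [this]
        rfl
    rw [h2, h3, ← h4, h5]
    rw [mul_div_assoc']
  · -- k > i : product over a swapped set
    have hk : k ≠ i := fun e => by simp [e] at h
    rw [phiGen, Function.update_of_ne hk]
    have key : ∏ j ∈ Finset.range (k.val+1),
        Wext d (fun j => toW d z (Equiv.swap a b j)) j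
        = ∏ j ∈ Finset.range (k.val+1), Wext d (toW d z) j := by
      refine Finset.prod_nbij' (ns i.val) (ns i.val) ?_ ?_ ?_ ?_ ?_
      · intro n hn
        have := Finset.mem_range.mp hn
        unfold ns; split_ifs <;> (apply Finset.mem_range.mpr; omega)
      · intro n hn
        have := Finset.mem_range.mp hn
        unfold ns; split_ifs <;> (apply Finset.mem_range.mpr; omega)
      · intro n _
        unfold ns; split_ifs <;> omega
      · intro n _
        unfold ns; split_ifs <;> omega
      · intro n _
        exact hW n
    rw [toZ, key]
    exact congrFun (toZ_toW d z) k

/-- The unit `2` of `ℝ`. -/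
noncomputable def u2 : ℝˣ := Units.mk0 (2:ℝ) two_ne_zero

/-- Cumulative exponents `E k = 1 + 2 + ⋯ + k`. -/
def E (k : ℕ) : ℕ := ∑ t ∈ Finset.range k, (t+1)

/-- A base point with injective `w`-coordinates. -/
noncomputable def zstar : Fin (d-1) → ℝˣ := fun i => u2 ^ E (i.val + 1)

lemma F_zstar {k : ℕ} (hk : k ≤ d - 1) : F d (zstar d) k = u2 ^ E k := by
  match k with
  | 0 => simp [F, E]
  | k+1 =>
    have h : k < d - 1 := by omega
    simp [F, h, zstar]

lemma toW_zstar_lt {j : Fin d} (hj : j.val < d - 1) :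
    toW d (zstar d) j = u2 ^ (j.val + 1) := by
  rw [toW, F_zstar d (by omega : j.val + 1 ≤ d - 1), F_zstar d (by omega : j.val ≤ d - 1)]
  have hE : E (j.val + 1) = E j.val + (j.val + 1) := Finset.sum_range_succ _ _
  rw [hE, pow_add, mul_div_cancel_left]

lemma toW_zstar_last {j : Fin d} (hj : j.val = d - 1) :
    toW d (zstar d) j = (u2 ^ E (d-1))⁻¹ := by
  have hd1 : 1 ≤ d := by have := j.isLt; omega
  rw [toW, hj, (by omega : d - 1 + 1 = d), F_last d _ hd1, F_zstar d le_rfl]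
  rw [one_div]

lemma u2_val_pow (m : ℕ) : ((u2 ^ m : ℝˣ) : ℝ) = (2:ℝ) ^ m := by
  rw [Units.val_pow_eq_pow_val]; rfl

lemma toW_zstar_injective : Function.Injective (toW d (zstar d)) := by
  intro j j' hjj'
  have hj := j.isLt
  have hj' := j'.isLt
  by_cases h1 : j.val < d - 1 <;> by_cases h2 : j'.val < d - 1
  · rw [toW_zstar_lt d h1, toW_zstar_lt d h2] at hjj'
    have := congrArg (Units.val) hjj'
    rw [u2_val_pow, u2_val_pow] at this
    have : j.val + 1 = j'.val + 1 := by
      by_contra hne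
      rcases Nat.lt_or_ge (j.val+1) (j'.val+1) with hlt | hge
      · exact absurd this (ne_of_lt (pow_lt_pow_right₀ (one_lt_two (α := ℝ)) hlt))
      · have hlt : j'.val + 1 < j.val + 1 := by omega
        exact absurd this.symm (ne_of_lt (pow_lt_pow_right₀ (one_lt_two (α := ℝ)) hlt))
    exact Fin.ext (by omega)
  · exfalso
    rw [toW_zstar_lt d h1, toW_zstar_last d (by omega)] at hjj'
    have h3 := congrArg (Units.val) hjj'
    rw [u2_val_pow, Units.val_inv_eq_inv_val, u2_val_pow] at h3
    have h4 : (1:ℝ) < 2 ^ (j.val + 1) := one_lt_pow₀ one_lt_two (by omega)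
    have h5 : ((2:ℝ) ^ E (d-1))⁻¹ ≤ 1 := by
      rw [inv_le_one_iff₀]
      right
      exact one_le_pow₀ (by norm_num : (1:ℝ) ≤ 2)
    rw [h3] at h4
    linarith
  · exfalso
    rw [toW_zstar_lt d h2, toW_zstar_last d (by omega)] at hjj'
    have h3 := congrArg (Units.val) hjj'
    rw [u2_val_pow, Units.val_inv_eq_inv_val, u2_val_pow] at h3
    have h4 : (1:ℝ) < 2 ^ (j'.val + 1) := one_lt_pow₀ one_lt_two (by omega)
    have h5 : ((2:ℝ) ^ E (d-1))⁻¹ ≤ 1 := by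
      rw [inv_le_one_iff₀]
      right
      exact one_le_pow₀ (by norm_num : (1:ℝ) ≤ 2)
    rw [← h3] at h4
    linarith
  · exact Fin.ext (by omega)

lemma actHom_injective : Function.Injective (actHom d) := by
  intro σ τ h
  have h0 : act d σ (zstar d) = act d τ (zstar d) := by
    have : actHom d σ = actHom d τ := h
    exact congrFun this (zstar d)
  simp only [act] at h0
  have h1 : (fun j => toW d (zstar d) (σ⁻¹ j)) = fun j => toW d (zstar d) (τ⁻¹ j) := by
    have e1 := toW_toZ d _ (prod_toW_comp d (zstar d) (σ⁻¹ : Equiv.Perm (Fin d)))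
    have e2 := toW_toZ d _ (prod_toW_comp d (zstar d) (τ⁻¹ : Equiv.Perm (Fin d)))
    rw [← e1, ← e2, h0]
  have h2 : ∀ j, σ⁻¹ j = τ⁻¹ j := fun j =>
    toW_zstar_injective d (congrFun h1 j)
  have h3 : σ⁻¹ = τ⁻¹ := Equiv.ext h2
  exact inv_injective h3

end PhiAux

/-- The group `G` generated by the rational transformations
`φ_1, …, φ_{d−1}` under composition is isomorphic to the symmetric group
`S_d`. -/
theorem phi_group_iso_symmetric (d : ℕ) (hd : 2 ≤ d) :
    Nonempty
      ((Submonoid.closure {f : Function.End (Fin (d-1) → ℝˣ) | ∃ i, f = phiGen d i})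
        ≃* Equiv.Perm (Fin d)) := by
  obtain ⟨n, rfl⟩ : ∃ n, d = n + 1 := ⟨d - 1, by omega⟩
  have hrange : MonoidHom.mrange (PhiAux.actHom (n+1))
      = Submonoid.closure {f : Function.End (Fin (n+1-1) → ℝˣ) | ∃ i, f = phiGen (n+1) i} := by
    rw [MonoidHom.mrange_eq_map, ← Equiv.Perm.mclosure_swap_castSucc_succ n,
      MonoidHom.map_mclosure]
    congr 1
    ext f
    constructor
    · rintro ⟨g, ⟨i, rfl⟩, rfl⟩
      refine ⟨i, ?_⟩
      exact PhiAux.act_swap (n+1) i (p1 := by have := i.isLt; omega)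
        (p2 := by have := i.isLt; omega)
    · rintro ⟨i, rfl⟩
      refine ⟨Equiv.swap i.castSucc i.succ, ⟨i, rfl⟩, ?_⟩
      exact PhiAux.act_swap (n+1) i (p1 := by have := i.isLt; omega)
        (p2 := by have := i.isLt; omega)
  set S := Submonoid.closure
    {f : Function.End (Fin (n+1-1) → ℝˣ) | ∃ i, f = phiGen (n+1) i} with hS
  let e : Equiv.Perm (Fin (n+1)) →* S :=
    (PhiAux.actHom (n+1)).codRestrict S (fun x => by
      rw [← hrange]; exact ⟨x, rfl⟩)
  have hbij : Function.Bijective e := by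
    constructor
    · intro a b hab
      exact PhiAux.actHom_injective (n+1) (congrArg Subtype.val hab)
    · rintro ⟨y, hy⟩
      rw [← hrange] at hy
      obtain ⟨x, hx⟩ := hy
      exact ⟨x, Subtype.ext hx⟩
  exact ⟨(MulEquiv.ofBijective e hbij).symm⟩
end
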